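/- arXiv:1502.07928 — 4 statements merged into one kernel-verified Lean document; each statement's English description precedes it below -/
import Mathlib

section
/- Non-Archimedean Gram–Schmidt process: Let (C, ℓ) be an orthogonalizable Λ-space and let {x_1, …, x_r} be a basis for a subspace V ≤ C. Then there exists an orthogonal ordered basis (x_1', …, x_r') for V whose members have the form x_1' = x_1 and, for j ≥ 2, x_j' = x_j − λ_{j,j−1} x_{j−1} − … − λ_{j,1} x_1 for some constants λ_{j,β} ∈ Λ. Moreover, if the first i elements (x_1, …, x_i) of the initial basis are orthogonal, then one can take x_j' = x_j for j = 1, …, i. -/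
/-!
Formalization setup following Usher–Zhang, "Persistent homology and Floer–Novikov theory".

We fix an additive subgroup `Γ ≤ ℝ` and abstract the Novikov field `Λ = Λ^{K,Γ}` as a field
`Λ` equipped with a valuation `ν : Λ → ℝ ∪ {∞}` (encoded in `EReal`, with `ν x = ⊤ ↔ x = 0`)
satisfying (V1),(V2),(V3), whose values on nonzero elements lie in (and fill out) `Γ`.

Filtration functions `ℓ : C → ℝ ∪ {-∞}` are encoded as `EReal`-valued functions which never
take the value `⊤`, with `ℓ x = ⊥ ↔ x = 0`.
-/

noncomputable section

/-- The Novikov field `Λ^{K,Γ}` together with its valuation `ν(Σ a_g T^g) = min {g : a_g ≠ 0}`: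
a field `Λ` with a function `ν : Λ → ℝ ∪ {∞}` such that (V1) `ν x = ∞ ↔ x = 0`,
(V2) `ν (xy) = ν x + ν y`, (V3) `ν (x+y) ≥ min (ν x) (ν y)`, and the values of `ν` on
nonzero elements are exactly the elements of `Γ`. -/
structure NovikovStructure (Γ : AddSubgroup ℝ) (Λ : Type*) [Field Λ] where
  ν : Λ → EReal
  ν_eq_top_iff : ∀ x : Λ, ν x = ⊤ ↔ x = 0
  ν_mul : ∀ x y : Λ, ν (x * y) = ν x + ν y
  min_le_ν_add : ∀ x y : Λ, min (ν x) (ν y) ≤ ν (x + y)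
  ν_mem : ∀ x : Λ, x ≠ 0 → ∃ g : Γ, ν x = ((g : ℝ) : EReal)
  ν_surj : ∀ g : Γ, ∃ x : Λ, ν x = ((g : ℝ) : EReal)

/-- `(C, ℓ)` is a non-Archimedean normed vector space over `Λ` (Definition 2.2):
(F1) `ℓ x = -∞ ↔ x = 0`; (F2) `ℓ (λ • x) = ℓ x - ν λ`; (F3) `ℓ (x+y) ≤ max (ℓ x) (ℓ y)`. -/
structure IsNonArchNorm {Γ : AddSubgroup ℝ} {Λ : Type*} [Field Λ] (NS : NovikovStructure Γ Λ)
    {C : Type*} [AddCommGroup C] [Module Λ C] (ℓ : C → EReal) : Prop where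
  eq_bot_iff : ∀ x : C, ℓ x = ⊥ ↔ x = 0
  ne_top : ∀ x : C, ℓ x ≠ ⊤
  smul_eq : ∀ (a : Λ) (x : C), ℓ (a • x) = ℓ x - NS.ν a
  add_le : ∀ x y : C, ℓ (x + y) ≤ max (ℓ x) (ℓ y)

/-- A finite ordered family `(w i)` in `(C, ℓ)` is orthogonal:
`ℓ (∑ λᵢ • wᵢ) = maxᵢ ℓ (λᵢ • wᵢ)` for all coefficients `λᵢ ∈ Λ` (Definition 2.8). -/
def IsOrthFamily (Λ : Type*) [Field Λ] {C : Type*} [AddCommGroup C] [Module Λ C]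
    (ℓ : C → EReal) {ι : Type*} [Fintype ι] (w : ι → C) : Prop :=
  ∀ a : ι → Λ, ℓ (∑ i, a i • w i) = ⨆ i, ℓ (a i • w i)

/-- Two subspaces `V, W` of `(C, ℓ)` are orthogonal if
`ℓ (v + w) = max (ℓ v) (ℓ w)` for all `v ∈ V`, `w ∈ W` (Definition 2.8). -/
def AreOrthogonal {Λ : Type*} [Field Λ] {C : Type*} [AddCommGroup C] [Module Λ C]
    (ℓ : C → EReal) (V W : Submodule Λ C) : Prop :=
  ∀ v ∈ V, ∀ w ∈ W, ℓ (v + w) = max (ℓ v) (ℓ w)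

/-- An orthogonalizable `Λ`-space: a finite-dimensional non-Archimedean normed `Λ`-vector
space admitting an orthogonal (finite) basis. -/
def IsOrthogonalizable {Γ : AddSubgroup ℝ} {Λ : Type*} [Field Λ] (NS : NovikovStructure Γ Λ)
    {C : Type*} [AddCommGroup C] [Module Λ C] (ℓ : C → EReal) : Prop :=
  IsNonArchNorm NS ℓ ∧ ∃ (n : ℕ) (b : Module.Basis (Fin n) Λ C), IsOrthFamily Λ ℓ ⇑b


set_option linter.unusedSectionVars false

section GramSchmidt

variable {Γ : AddSubgroup ℝ} {Λ : Type*} [Field Λ] {NS : NovikovStructure Γ Λ}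
variable {C : Type*} [AddCommGroup C] [Module Λ C] {ℓ : C → EReal}

namespace GS

lemma ell_zero (hN : IsNonArchNorm NS ℓ) : ℓ 0 = ⊥ := (hN.eq_bot_iff 0).2 rfl

lemma nu_one : NS.ν 1 = 0 := by
  obtain ⟨g, hg⟩ := NS.ν_mem 1 one_ne_zero
  have h : NS.ν (1 : Λ) = NS.ν 1 + NS.ν 1 := by rw [← NS.ν_mul]; norm_num
  rw [hg] at h
  have h2 : (g : ℝ) = g + g := by exact_mod_cast h
  have h3 : (g : ℝ) = 0 := by linarith
  rw [hg]; exact_mod_cast h3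

lemma nu_neg_one : NS.ν (-1 : Λ) = 0 := by
  obtain ⟨g, hg⟩ := NS.ν_mem (-1 : Λ) (by simp)
  have h : NS.ν (1 : Λ) = NS.ν (-1) + NS.ν (-1) := by rw [← NS.ν_mul]; norm_num
  rw [nu_one, hg] at h
  have h2 : (0 : ℝ) = g + g := by exact_mod_cast h
  have h3 : (g : ℝ) = 0 := by linarith
  rw [hg]; exact_mod_cast h3

lemma nu_neg (a : Λ) : NS.ν (-a) = NS.ν a := by
  have h : (-a) = (-1) * a := by ring
  rw [h, NS.ν_mul, nu_neg_one, zero_add]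

lemma ell_neg (hN : IsNonArchNorm NS ℓ) (z : C) : ℓ (-z) = ℓ z := by
  have h : (-z) = (-1 : Λ) • z := by simp
  rw [h, hN.smul_eq, nu_neg_one]
  simp

lemma ell_sub_le (hN : IsNonArchNorm NS ℓ) (x y : C) : ℓ (x - y) ≤ max (ℓ x) (ℓ y) := by
  have h := hN.add_le x (-y)
  rw [ell_neg hN] at h
  simpa [sub_eq_add_neg] using h

lemma ell_sum_le (hN : IsNonArchNorm NS ℓ) {ι : Type*} (s : Finset ι) (z : ι → C) {B : EReal}
    (h : ∀ i ∈ s, ℓ (z i) ≤ B) : ℓ (∑ i ∈ s, z i) ≤ B := by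
  classical
  induction s using Finset.cons_induction with
  | empty => rw [Finset.sum_empty, ell_zero hN]; exact bot_le
  | cons a s ha ih =>
    rw [Finset.sum_cons]
    exact le_trans (hN.add_le _ _)
      (max_le (h a (Finset.mem_cons_self a s)) (ih fun i hi => h i (Finset.mem_cons_of_mem hi)))

lemma orth_comp_equiv {ι ι' : Type*} [Fintype ι] [Fintype ι'] {w : ι → C}
    (hw : IsOrthFamily Λ ℓ w) (e : ι' ≃ ι) : IsOrthFamily Λ ℓ (w ∘ e) := by
  intro a
  have h1 : ∑ i : ι', a i • (w ∘ e) i = ∑ i : ι, a (e.symm i) • w i := by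
    rw [← Equiv.sum_comp e (fun i => a (e.symm i) • w i)]
    simp
  have h2 : (⨆ i : ι', ℓ (a i • (w ∘ e) i)) = ⨆ i : ι, ℓ (a (e.symm i) • w i) := by
    rw [← Equiv.iSup_comp (g := fun i => ℓ (a (e.symm i) • w i)) e]
    simp
  rw [h1, h2]; exact hw _

lemma orth_extend {ι : Type*} [Fintype ι] {w : ι → C} (hN : IsNonArchNorm NS ℓ)
    (hw : IsOrthFamily Λ ℓ w) {y : C}
    (hy : ∀ u ∈ Submodule.span Λ (Set.range w), ℓ y ≤ ℓ (y + u)) :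
    IsOrthFamily Λ ℓ (fun o : Option ι => o.elim y w) := by
  intro a
  classical
  set lam := a none with hlam
  set u := ∑ i : ι, a (some i) • w i with hu
  have husum : ∑ o : Option ι, a o • (Option.elim o y w) = lam • y + u := by
    rw [Fintype.sum_option]
    rfl
  have hiS : (⨆ o : Option ι, ℓ (a o • Option.elim o y w))
      = ℓ (lam • y) ⊔ ⨆ i, ℓ (a (some i) • w i) := iSup_option _
  have humem : u ∈ Submodule.span Λ (Set.range w) :=
    Submodule.sum_mem _ fun i _ => Submodule.smul_mem _ _ (Submodule.subset_span ⟨i, rfl⟩)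
  have hwu : ℓ u = ⨆ i, ℓ (a (some i) • w i) := hw _
  rw [husum, hiS, ← hwu]
  by_cases h0 : lam = 0
  · rw [h0, zero_smul, zero_add, ell_zero hN]
    simp
  · have hkey : ℓ (lam • y) ≤ ℓ (lam • y + u) := by
      have h1 : ℓ y ≤ ℓ (y + lam⁻¹ • u) := hy _ (Submodule.smul_mem _ _ humem)
      have h2 : ℓ (lam • (y + lam⁻¹ • u)) = ℓ (y + lam⁻¹ • u) - NS.ν lam := hN.smul_eq _ _
      have h3 : lam • (y + lam⁻¹ • u) = lam • y + u := by
        rw [smul_add, smul_inv_smul₀ h0]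
      rw [h3] at h2
      rw [hN.smul_eq, h2]
      exact EReal.sub_le_sub h1 le_rfl
    have h4 : ℓ u ≤ ℓ (lam • y + u) := by
      have he : ℓ u = ℓ ((lam • y + u) - lam • y) :=
        congrArg ℓ (add_sub_cancel_left (lam • y) u).symm
      rw [he]
      exact le_trans (ell_sub_le hN _ _) (max_le le_rfl hkey)
    exact le_antisymm (hN.add_le _ _) (max_le hkey h4)

lemma coord_span_zero {n : ℕ} (e : Module.Basis (Fin n) Λ C) {S : Set C} {j : Fin n}
    (hS : ∀ z ∈ S, e.repr z j = 0) {y : C} (hy : y ∈ Submodule.span Λ S) :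
    e.repr y j = 0 := by
  induction hy using Submodule.span_induction with
  | mem z hz => exact hS z hz
  | zero => simp
  | add a b _ _ ha hb => simp [map_add, ha, hb]
  | smul c a _ ha => simp [map_smul, ha]

lemma ell_eq_sup_coord {n : ℕ} {e : Module.Basis (Fin n) Λ C} (he : IsOrthFamily Λ ℓ ⇑e) (z : C) :
    ℓ z = ⨆ j, ℓ (e.repr z j • e j) := by
  have h := he fun j => e.repr z j
  rw [e.sum_repr z] at h
  exact h

lemma echelon (hN : IsNonArchNorm NS ℓ) {n : ℕ} (e : Module.Basis (Fin n) Λ C)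
    (he : IsOrthFamily Λ ℓ ⇑e) :
    ∀ (k : ℕ) (s : Finset (Fin n)) (w₀ : Fin k → C),
      (∀ m j, j ∉ s → e.repr (w₀ m) j = 0) →
      ∃ (k' : ℕ) (w : Fin k' → C) (J : Fin k' → Fin n),
        Function.Injective J ∧ (∀ β, J β ∈ s) ∧
        Submodule.span Λ (Set.range w) = Submodule.span Λ (Set.range w₀) ∧
        (∀ β, e.repr (w β) (J β) = 1) ∧
        (∀ β α, α ≠ β → e.repr (w β) (J α) = 0) ∧
        (∀ β, ℓ (w β) ≤ ℓ (e (J β))) := by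
  classical
  intro k
  induction k with
  | zero =>
    intro s w₀ _
    refine ⟨0, Fin.elim0, Fin.elim0, fun β => β.elim0, fun β => β.elim0, ?_,
      fun β => β.elim0, fun β => β.elim0, fun β => β.elim0⟩
    have h1 : Set.range (Fin.elim0 : Fin 0 → C) = ∅ := Set.range_eq_empty _
    have h2 : Set.range w₀ = ∅ := Set.range_eq_empty _
    rw [h1, h2]
  | succ k ih =>
    intro s w₀ hsupp
    by_cases hz : w₀ 0 = 0
    · obtain ⟨k', w, J, hJinj, hJs, hspan, hp1, hp0, hple⟩ :=
        ih s (Fin.tail w₀) (fun m j hj => hsupp m.succ j hj)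
      refine ⟨k', w, J, hJinj, hJs, ?_, hp1, hp0, hple⟩
      rw [hspan]
      conv_rhs => rw [← Fin.cons_self_tail w₀]
      rw [Fin.range_cons, hz, Submodule.span_insert_zero]
    · -- main case: pivot selection on u = w₀ 0
      have hlu : ℓ (w₀ 0) = ⨆ j, ℓ (e.repr (w₀ 0) j • e j) := ell_eq_sup_coord he _
      have hne : ℓ (w₀ 0) ≠ ⊥ := fun h => hz ((hN.eq_bot_iff _).1 h)
      have hnonempty : Nonempty (Fin n) := by
        rcases Nat.eq_zero_or_pos n with h | h
        · exfalso; apply hne; rw [hlu]; subst h; exact iSup_of_empty _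
        · exact ⟨⟨0, h⟩⟩
      obtain ⟨j₀, hj₀max⟩ := Finite.exists_max (fun j => ℓ (e.repr (w₀ 0) j • e j))
      have hj0 : ℓ (e.repr (w₀ 0) j₀ • e j₀) = ℓ (w₀ 0) :=
        le_antisymm (hlu ▸ le_iSup (fun j => ℓ (e.repr (w₀ 0) j • e j)) j₀)
          (by rw [hlu]; exact iSup_le hj₀max)
      set a₀ := e.repr (w₀ 0) j₀ with ha₀
      have ha₀ne : a₀ ≠ 0 := by
        intro h; apply hne; rw [← hj0, h, zero_smul, ell_zero hN]
      have hj₀s : j₀ ∈ s := by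
        by_contra h; exact ha₀ne (hsupp 0 j₀ h)
      set u' := a₀⁻¹ • w₀ 0 with hu'
      have hru' : ∀ j, e.repr u' j = a₀⁻¹ * e.repr (w₀ 0) j := by
        intro j; rw [hu', map_smul]; simp
      have hru'j₀ : e.repr u' j₀ = 1 := by rw [hru', inv_mul_cancel₀ ha₀ne]
      have hlu' : ℓ u' = ℓ (e j₀) := by
        have h1 : ℓ (a₀⁻¹ • (a₀ • e j₀)) = ℓ (a₀⁻¹ • w₀ 0) := by
          rw [hN.smul_eq a₀⁻¹ (a₀ • e j₀), hN.smul_eq a₀⁻¹ (w₀ 0), hj0]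
        rw [inv_smul_smul₀ ha₀ne] at h1
        rw [hu']; exact h1.symm
      set c := fun m : Fin k => e.repr (w₀ m.succ) j₀ with hc
      set w₁ := fun m : Fin k => w₀ m.succ - (c m) • u' with hw₁
      have hw₁j₀ : ∀ m, e.repr (w₁ m) j₀ = 0 := by
        intro m
        simp only [hw₁, map_sub, map_smul, Finsupp.sub_apply, Finsupp.smul_apply,
          smul_eq_mul, hru'j₀, mul_one, hc, sub_self]
      have hw₁supp : ∀ m j, j ∉ s.erase j₀ → e.repr (w₁ m) j = 0 := by
        intro m j hj
        by_cases hjj : j = j₀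
        · subst hjj; exact hw₁j₀ m
        · have hjs : j ∉ s := by
            intro hmem; exact hj (Finset.mem_erase.2 ⟨hjj, hmem⟩)
          have h1 : e.repr (w₀ m.succ) j = 0 := hsupp m.succ j hjs
          have h2 : e.repr (w₀ 0) j = 0 := hsupp 0 j hjs
          simp only [hw₁, map_sub, map_smul, Finsupp.sub_apply, Finsupp.smul_apply,
            smul_eq_mul, h1, hru', h2, mul_zero, sub_zero]
      obtain ⟨k', w, J, hJinj, hJs, hspan, hp1, hp0, hple⟩ := ih (s.erase j₀) w₁ hw₁supp
      have hwj₀ : ∀ β, e.repr (w β) j₀ = 0 := by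
        intro β
        have hmem : w β ∈ Submodule.span Λ (Set.range w₁) :=
          hspan ▸ Submodule.subset_span ⟨β, rfl⟩
        exact coord_span_zero e (by rintro z ⟨m, rfl⟩; exact hw₁j₀ m) hmem
      set dd := fun β : Fin k' => e.repr u' (J β) with hdd
      set u'' := u' - ∑ β : Fin k', dd β • w β with hu''
      have hcoordu'' : ∀ j, e.repr u'' j = e.repr u' j - ∑ β, dd β * e.repr (w β) j := by
        intro j
        simp only [hu'', map_sub, map_sum, map_smul, Finsupp.sub_apply,
          Finsupp.coe_finset_sum, Finset.sum_apply, Finsupp.smul_apply, smul_eq_mul]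
      have hu''j₀ : e.repr u'' j₀ = 1 := by
        rw [hcoordu'', hru'j₀]
        rw [Finset.sum_eq_zero (fun β _ => by rw [hwj₀ β, mul_zero]), sub_zero]
      have hu''J : ∀ α, e.repr u'' (J α) = 0 := by
        intro α
        rw [hcoordu'']
        rw [Finset.sum_eq_single α
          (fun β _ hβ => by rw [hp0 β α (fun h => hβ h.symm), mul_zero])
          (fun h => absurd (Finset.mem_univ α) h)]
        rw [hp1 α, mul_one, hdd, sub_self]
      have hlu'sup : ℓ u' = ⨆ j, ℓ (e.repr u' j • e j) := ell_eq_sup_coord he _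
      have hdβ : ∀ β, ℓ (dd β • w β) ≤ ℓ u' := by
        intro β
        have h1 : ℓ (dd β • w β) ≤ ℓ (dd β • e (J β)) := by
          rw [hN.smul_eq, hN.smul_eq]; exact EReal.sub_le_sub (hple β) le_rfl
        exact h1.trans (by rw [hlu'sup]; exact le_iSup (fun j => ℓ (e.repr u' j • e j)) (J β))
      have hlu'' : ℓ u'' ≤ ℓ (e j₀) := by
        rw [hu'']
        refine le_trans (ell_sub_le hN _ _) (max_le (le_of_eq hlu') ?_)
        rw [← hlu']
        exact ell_sum_le hN _ _ (fun β _ => hdβ β)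
      refine ⟨k' + 1, Fin.cons u'' w, Fin.cons j₀ J, ?_, ?_, ?_, ?_, ?_, ?_⟩
      · refine Fin.cons_injective_iff.2 ⟨?_, hJinj⟩
        rintro ⟨α, hα⟩
        exact (Finset.ne_of_mem_erase (hJs α)) hα
      · intro β
        refine Fin.cases ?_ ?_ β
        · rw [Fin.cons_zero]; exact hj₀s
        · intro γ; rw [Fin.cons_succ]; exact Finset.mem_of_mem_erase (hJs γ)
      · -- span equality
        apply le_antisymm
        · rw [Submodule.span_le]
          rintro _ ⟨β, rfl⟩
          have hu₀ : w₀ 0 ∈ Submodule.span Λ (Set.range w₀) := Submodule.subset_span ⟨0, rfl⟩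
          have hu'm : u' ∈ Submodule.span Λ (Set.range w₀) := Submodule.smul_mem _ _ hu₀
          have hw₁m : ∀ m, w₁ m ∈ Submodule.span Λ (Set.range w₀) := fun m =>
            Submodule.sub_mem _ (Submodule.subset_span ⟨m.succ, rfl⟩) (Submodule.smul_mem _ _ hu'm)
          have hwspan : Submodule.span Λ (Set.range w) ≤ Submodule.span Λ (Set.range w₀) := by
            rw [hspan, Submodule.span_le]; rintro _ ⟨m, rfl⟩; exact hw₁m m
          have hwβ : ∀ γ, w γ ∈ Submodule.span Λ (Set.range w₀) := fun γ =>
            hwspan (Submodule.subset_span ⟨γ, rfl⟩)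
          refine Fin.cases ?_ ?_ β
          · rw [Fin.cons_zero, hu'']
            exact Submodule.sub_mem _ hu'm
              (Submodule.sum_mem _ fun γ _ => Submodule.smul_mem _ _ (hwβ γ))
          · intro γ; rw [Fin.cons_succ]; exact hwβ γ
        · rw [Submodule.span_le]
          rintro _ ⟨m, rfl⟩
          have hu''m : u'' ∈ Submodule.span Λ (Set.range (Fin.cons u'' w : Fin (k'+1) → C)) :=
            Submodule.subset_span ⟨0, Fin.cons_zero _ _⟩
          have hwγ : ∀ γ, w γ ∈ Submodule.span Λ (Set.range (Fin.cons u'' w : Fin (k'+1) → C)) :=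
            fun γ => Submodule.subset_span ⟨γ.succ, Fin.cons_succ _ _ _⟩
          have hu'm : u' ∈ Submodule.span Λ (Set.range (Fin.cons u'' w : Fin (k'+1) → C)) := by
            have h : u' = u'' + ∑ β, dd β • w β := by rw [hu'']; abel
            rw [h]
            exact Submodule.add_mem _ hu''m
              (Submodule.sum_mem _ fun γ _ => Submodule.smul_mem _ _ (hwγ γ))
          have hum : w₀ 0 ∈ Submodule.span Λ (Set.range (Fin.cons u'' w : Fin (k'+1) → C)) := by
            have h : w₀ 0 = a₀ • u' := by rw [hu', smul_inv_smul₀ ha₀ne]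
            rw [h]; exact Submodule.smul_mem _ _ hu'm
          have hw₁span : Submodule.span Λ (Set.range w₁)
              ≤ Submodule.span Λ (Set.range (Fin.cons u'' w : Fin (k'+1) → C)) := by
            rw [← hspan, Submodule.span_le]; rintro _ ⟨γ, rfl⟩; exact hwγ γ
          refine Fin.cases ?_ ?_ m
          · exact hum
          · intro m'
            have h : w₁ m' + c m' • u' = w₀ m'.succ := by
              show w₀ m'.succ - c m' • u' + c m' • u' = w₀ m'.succ
              abel
            rw [← h]
            exact Submodule.add_mem _ (hw₁span (Submodule.subset_span ⟨m', rfl⟩))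
              (Submodule.smul_mem _ _ hu'm)
      · intro β
        refine Fin.cases ?_ ?_ β
        · rw [Fin.cons_zero, Fin.cons_zero]; exact hu''j₀
        · intro γ; rw [Fin.cons_succ, Fin.cons_succ]; exact hp1 γ
      · intro β α
        refine Fin.cases ?_ (fun γ => ?_) β <;> refine Fin.cases ?_ (fun δ => ?_) α
        · intro h; exact absurd rfl h
        · intro _
          rw [Fin.cons_zero, Fin.cons_succ]; exact hu''J δ
        · intro _
          rw [Fin.cons_succ, Fin.cons_zero]; exact hwj₀ γ
        · intro h
          rw [Fin.cons_succ, Fin.cons_succ]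
          exact hp0 γ δ (fun hh => h (congrArg Fin.succ hh))
      · intro β
        refine Fin.cases ?_ ?_ β
        · rw [Fin.cons_zero, Fin.cons_zero]; exact hlu''
        · intro γ; rw [Fin.cons_succ, Fin.cons_succ]; exact hple γ

lemma bestApprox (hN : IsNonArchNorm NS ℓ) {n : ℕ} (e : Module.Basis (Fin n) Λ C)
    (he : IsOrthFamily Λ ℓ ⇑e) {ι : Type*} [Fintype ι] (f : ι → C) (x : C) :
    ∃ v₀ ∈ Submodule.span Λ (Set.range f), ∀ v ∈ Submodule.span Λ (Set.range f),
      ℓ (x - v₀) ≤ ℓ (x - v) := by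
  classical
  obtain ⟨g⟩ : Nonempty (Fin (Fintype.card ι) ≃ ι) := ⟨(Fintype.equivFin ι).symm⟩
  have hrange : Set.range (f ∘ g) = Set.range f := g.surjective.range_comp f
  obtain ⟨k', w, J, hJinj, hJs, hspan, hp1, hp0, hple⟩ :=
    echelon hN e he _ Finset.univ (f ∘ g) (fun m j hj => absurd (Finset.mem_univ j) hj)
  rw [hrange] at hspan
  set v₀ := ∑ β : Fin k', e.repr x (J β) • w β with hv₀
  have hv₀V : v₀ ∈ Submodule.span Λ (Set.range f) := by
    rw [← hspan]
    exact Submodule.sum_mem _ fun β _ => Submodule.smul_mem _ _ (Submodule.subset_span ⟨β, rfl⟩)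
  refine ⟨v₀, hv₀V, ?_⟩
  intro v' hv'
  set y := x - v₀ with hy
  have hcoordy : ∀ j, e.repr y j = e.repr x j - ∑ β, e.repr x (J β) * e.repr (w β) j := by
    intro j
    simp only [hy, hv₀, map_sub, map_sum, map_smul, Finsupp.sub_apply,
      Finsupp.coe_finset_sum, Finset.sum_apply, Finsupp.smul_apply, smul_eq_mul]
  have hyJ : ∀ α, e.repr y (J α) = 0 := by
    intro α
    rw [hcoordy]
    rw [Finset.sum_eq_single α
      (fun β _ hβ => by rw [hp0 β α (fun h => hβ h.symm), mul_zero])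
      (fun h => absurd (Finset.mem_univ α) h)]
    rw [hp1 α, mul_one, sub_self]
  have hvV : v' - v₀ ∈ Submodule.span Λ (Set.range w) := by
    rw [hspan]; exact Submodule.sub_mem _ hv' hv₀V
  obtain ⟨lam, hlam⟩ := (Submodule.mem_span_range_iff_exists_fun Λ).1 hvV
  have hxy : ℓ (x - v') = ℓ (y - (v' - v₀)) := by
    have h : x - v' = y - (v' - v₀) := by rw [hy]; abel
    rw [h]
  have hcoord : ∀ α, e.repr (y - (v' - v₀)) (J α) = - lam α := by
    intro α
    have h : e.repr (y - (v' - v₀)) (J α)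
        = e.repr y (J α) - ∑ β, lam β * e.repr (w β) (J α) := by
      rw [← hlam]
      simp only [map_sub, map_sum, map_smul, Finsupp.sub_apply,
        Finsupp.coe_finset_sum, Finset.sum_apply, Finsupp.smul_apply, smul_eq_mul]
    rw [h, hyJ α]
    rw [Finset.sum_eq_single α
      (fun β _ hβ => by rw [hp0 β α (fun hh => hβ hh.symm), mul_zero])
      (fun h => absurd (Finset.mem_univ α) h)]
    rw [hp1 α, mul_one, zero_sub]
  have hsup : ℓ (y - (v' - v₀)) = ⨆ j, ℓ (e.repr (y - (v' - v₀)) j • e j) :=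
    ell_eq_sup_coord he _
  have hterm : ∀ β, ℓ (lam β • w β) ≤ ℓ (y - (v' - v₀)) := by
    intro β
    have h1 : ℓ (lam β • w β) ≤ ℓ (lam β • e (J β)) := by
      rw [hN.smul_eq, hN.smul_eq]; exact EReal.sub_le_sub (hple β) le_rfl
    have h2 : ℓ (lam β • e (J β)) = ℓ ((- lam β) • e (J β)) := by
      rw [hN.smul_eq, hN.smul_eq, nu_neg]
    refine h1.trans (h2.le.trans ?_)
    calc ℓ ((-lam β) • e (J β)) = ℓ (e.repr (y - (v' - v₀)) (J β) • e (J β)) := by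
          rw [hcoord β]
      _ ≤ ⨆ j, ℓ (e.repr (y - (v' - v₀)) j • e j) :=
          le_iSup (fun j => ℓ (e.repr (y - (v' - v₀)) j • e j)) (J β)
      _ = ℓ (y - (v' - v₀)) := hsup.symm
  have hv : ℓ (v' - v₀) ≤ ℓ (y - (v' - v₀)) := by
    conv_lhs => rw [← hlam]
    exact ell_sum_le hN _ _ fun β _ => hterm β
  have hyle : ℓ y ≤ ℓ (y - (v' - v₀)) := by
    have h : ℓ y = ℓ ((y - (v' - v₀)) + (v' - v₀)) := by
      rw [sub_add_cancel]
    rw [h]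
    exact le_trans (hN.add_le _ _) (max_le le_rfl hv)
  rw [hxy]
  exact hyle

lemma range_sub {r : ℕ} {m m' : ℕ} (hmm : m ≤ m') (x : Fin r → C) :
    Set.range (fun b : {b : Fin r // (b : ℕ) < m} => x ↑b)
      ⊆ Set.range (fun b : {b : Fin r // (b : ℕ) < m'} => x ↑b) := by
  rintro _ ⟨⟨b, hb⟩, rfl⟩
  exact ⟨⟨b, lt_of_lt_of_le hb hmm⟩, rfl⟩

lemma tri_span {r : ℕ} (x x' : Fin r → C)
    (h : ∀ j : Fin r, x' j - x j
      ∈ Submodule.span Λ (Set.range fun b : {b : Fin r // (b : ℕ) < (j : ℕ)} => x ↑b)) :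
    ∀ m : ℕ, Submodule.span Λ (Set.range fun b : {b : Fin r // (b : ℕ) < m} => x' ↑b)
      = Submodule.span Λ (Set.range fun b : {b : Fin r // (b : ℕ) < m} => x ↑b) := by
  intro m
  induction m with
  | zero =>
    have hE : IsEmpty {b : Fin r // (b : ℕ) < 0} :=
      ⟨fun b => absurd b.2 (Nat.not_lt_zero _)⟩
    rw [@Set.range_eq_empty _ _ hE, @Set.range_eq_empty _ _ hE]
  | succ m IH =>
    apply le_antisymm
    · rw [Submodule.span_le]
      rintro _ ⟨⟨b, hb⟩, rfl⟩
      have h1 : x b ∈ Submodule.span Λ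
          (Set.range fun c : {c : Fin r // (c : ℕ) < m + 1} => x ↑c) :=
        Submodule.subset_span ⟨⟨b, hb⟩, rfl⟩
      have h2 : x' b - x b ∈ Submodule.span Λ
          (Set.range fun c : {c : Fin r // (c : ℕ) < m + 1} => x ↑c) :=
        Submodule.span_mono (range_sub (le_of_lt hb) x) (h b)
      have h3 := Submodule.add_mem _ h1 h2
      have h4 : x b + (x' b - x b) = x' b := by abel
      rw [h4] at h3
      exact h3
    · rw [Submodule.span_le]
      rintro _ ⟨⟨b, hb⟩, rfl⟩
      have h1 : x' b ∈ Submodule.span Λ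
          (Set.range fun c : {c : Fin r // (c : ℕ) < m + 1} => x' ↑c) :=
        Submodule.subset_span ⟨⟨b, hb⟩, rfl⟩
      have h2 : x' b - x b ∈ Submodule.span Λ
          (Set.range fun c : {c : Fin r // (c : ℕ) < m} => x ↑c) :=
        Submodule.span_mono (range_sub (Nat.lt_succ_iff.1 hb) x) (h b)
      rw [← IH] at h2
      have h3 : x' b - x b ∈ Submodule.span Λ
          (Set.range fun c : {c : Fin r // (c : ℕ) < m + 1} => x' ↑c) :=
        Submodule.span_mono (range_sub (Nat.le_succ m) x') h2
      have h4 := Submodule.sub_mem _ h1 h3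
      have h5 : x' b - (x' b - x b) = x b := by abel
      rw [h5] at h4
      exact h4

lemma sum_ite_subtype {M : Type*} [AddCommMonoid M] {r m : ℕ} (F : Fin r → M) :
    ∑ b : Fin r, (if (b : ℕ) < m then F b else 0)
      = ∑ b : {b : Fin r // (b : ℕ) < m}, F ↑b := by
  classical
  rw [← Finset.sum_filter]
  exact Finset.sum_subtype (Finset.filter (fun b : Fin r => (b : ℕ) < m) Finset.univ)
    (by simp) F

lemma hctri_of_hc {r : ℕ} {x x' : Fin r → C}
    (hc : ∀ j : Fin r, ∃ lam : Fin r → Λ,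
      x' j = x j - ∑ b : Fin r, if (b : ℕ) < (j : ℕ) then lam b • x b else 0) :
    ∀ j : Fin r, x' j - x j
      ∈ Submodule.span Λ (Set.range fun b : {b : Fin r // (b : ℕ) < (j : ℕ)} => x ↑b) := by
  intro j
  obtain ⟨lam, hlam⟩ := hc j
  have h : x' j - x j = -(∑ b : Fin r, if (b : ℕ) < (j : ℕ) then lam b • x b else 0) := by
    rw [hlam]; abel
  rw [h]
  refine Submodule.neg_mem _ (Submodule.sum_mem _ ?_)
  intro b _
  by_cases hb : (b : ℕ) < (j : ℕ)
  · rw [if_pos hb]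
    exact Submodule.smul_mem _ _ (Submodule.subset_span ⟨⟨b, hb⟩, rfl⟩)
  · rw [if_neg hb]; exact Submodule.zero_mem _

lemma main_aux (hN : IsNonArchNorm NS ℓ) {n : ℕ} (e : Module.Basis (Fin n) Λ C)
    (he : IsOrthFamily Λ ℓ ⇑e) {r : ℕ} (x : Fin r → C) (i : ℕ)
    (hi : IsOrthFamily Λ ℓ (fun j : {j : Fin r // (j : ℕ) < i} => x j)) :
    ∀ d : ℕ, ∃ x' : Fin r → C,
      IsOrthFamily Λ ℓ (fun j : {j : Fin r // (j : ℕ) < i + d} => x' j) ∧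
      (∀ j : Fin r, ¬ ((j : ℕ) < i + d) → x' j = x j) ∧
      (∀ j : Fin r, (j : ℕ) < i → x' j = x j) ∧
      (∀ j : Fin r, ∃ lam : Fin r → Λ,
        x' j = x j - ∑ b : Fin r, if (b : ℕ) < (j : ℕ) then lam b • x b else 0) := by
  classical
  intro d
  induction d with
  | zero => exact ⟨x, hi, fun j _ => rfl, fun j _ => rfl, fun j => ⟨0, by simp⟩⟩
  | succ d IH =>
    obtain ⟨x', ha, hb, hbi, hc⟩ := IH
    by_cases hmr : i + d < r
    case neg =>
      refine ⟨x', ?_, fun j hj => hb j (fun hj' => hj (Nat.lt_succ_of_lt hj')), hbi, hc⟩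
      have hiff : ∀ j : Fin r, ((j : ℕ) < i + d) ↔ ((j : ℕ) < i + d + 1) := by
        intro j
        have := j.2
        omega
      exact orth_comp_equiv ha (Equiv.subtypeEquivRight hiff).symm
    case pos =>
      set m := i + d with hm
      set jm : Fin r := ⟨m, hmr⟩ with hjm
      obtain ⟨v₀, hv₀V, hmin⟩ :=
        bestApprox hN e he (fun b : {j : Fin r // (j : ℕ) < m} => x' ↑b) (x jm)
      set y := x jm - v₀ with hy
      set x'' := Function.update x' jm y with hx''
      have hjmval : (jm : ℕ) = m := rfl
      have hx''lt : ∀ j : Fin r, (j : ℕ) < m → x'' j = x' j := by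
        intro j hj
        rw [hx'', Function.update_of_ne]
        intro hjj
        rw [hjj, hjmval] at hj
        exact lt_irrefl m hj
      have hx''jm : x'' jm = y := by rw [hx'']; simp
      have hx''gt : ∀ j : Fin r, ¬ ((j : ℕ) < m + 1) → x'' j = x j := by
        intro j hj
        have hne : j ≠ jm := by
          intro hjj; rw [hjj, hjmval] at hj; omega
        rw [hx'', Function.update_of_ne hne]
        exact hb j (fun hj' => hj (Nat.lt_succ_of_lt hj'))
      -- (c) for the new family
      have hctri := hctri_of_hc hc
      have hcjm : ∃ lam : Fin r → Λ, x'' jm = x jm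
          - ∑ b : Fin r, if (b : ℕ) < (jm : ℕ) then lam b • x b else 0 := by
        have hv₀' : v₀ ∈ Submodule.span Λ
            (Set.range fun b : {b : Fin r // (b : ℕ) < m} => x ↑b) := by
          rw [← tri_span x x' hctri m]
          exact hv₀V
        obtain ⟨cc, hcc⟩ := (Submodule.mem_span_range_iff_exists_fun Λ).1 hv₀'
        refine ⟨fun b => if h : (b : ℕ) < m then cc ⟨b, h⟩ else 0, ?_⟩
        rw [hx''jm, hy]
        congr 1
        rw [sum_ite_subtype (m := m)
          (F := fun b : Fin r => (if h : (b : ℕ) < m then cc ⟨b, h⟩ else (0:Λ)) • x b)]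
        rw [← hcc]
        refine Finset.sum_congr rfl ?_
        rintro ⟨b, hb'⟩ _
        rw [dif_pos hb']
      have hcfull : ∀ j : Fin r, ∃ lam : Fin r → Λ, x'' j = x j
          - ∑ b : Fin r, if (b : ℕ) < (j : ℕ) then lam b • x b else 0 := by
        intro j
        by_cases hj : j = jm
        · rw [hj]; exact hcjm
        · rw [hx'', Function.update_of_ne hj]; exact hc j
      -- orthogonality for m + 1
      have hymin : ∀ u ∈ Submodule.span Λ
          (Set.range fun b : {j : Fin r // (j : ℕ) < m} => x' ↑b), ℓ y ≤ ℓ (y + u) := by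
        intro u hu
        have h1 : y + u = x jm - (v₀ - u) := by rw [hy]; abel
        rw [h1]
        exact hmin _ (Submodule.sub_mem _ hv₀V hu)
      have hext := orth_extend hN ha hymin
      have hmlt : (jm : ℕ) < m + 1 := Nat.lt_succ_self m
      let E : {j : Fin r // (j : ℕ) < m + 1} ≃ Option {j : Fin r // (j : ℕ) < m} :=
        { toFun := fun j => if h : ((j : Fin r) : ℕ) < m then some ⟨j, h⟩ else none
          invFun := fun o => o.elim ⟨jm, hmlt⟩ (fun b => ⟨b, Nat.lt_succ_of_lt b.2⟩)
          left_inv := by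
            rintro ⟨j, hj⟩
            by_cases h : (j : ℕ) < m
            · simp [h]
            · have hjq : j = jm := by
                apply Fin.ext
                rw [hjmval]
                omega
              simp [h, hjq, hjmval]
          right_inv := by
            rintro (_ | b)
            · have : ¬ ((jm : ℕ) < m) := by rw [hjmval]; omega
              simp [this]
            · simp [b.2] }
      have hfam : (fun j : {j : Fin r // (j : ℕ) < m + 1} => x'' ↑j)
          = (fun o : Option {j : Fin r // (j : ℕ) < m} => o.elim y
              (fun b : {j : Fin r // (j : ℕ) < m} => x' ↑b)) ∘ E := by
        funext j
        by_cases h : ((j : Fin r) : ℕ) < m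
        · have hEj : E j = some ⟨j, h⟩ := dif_pos h
          simp only [Function.comp_apply, hEj, Option.elim]
          exact hx''lt _ h
        · have hEj : E j = none := dif_neg h
          simp only [Function.comp_apply, hEj, Option.elim]
          have hjq : (j : Fin r) = jm := by
            apply Fin.ext
            rw [hjmval]
            have := j.2
            omega
          rw [hjq, hx''jm]
      refine ⟨x'', ?_, hx''gt, ?_, hcfull⟩
      · show IsOrthFamily Λ ℓ (fun j : {j : Fin r // (j : ℕ) < m + 1} => x'' ↑j)
        rw [hfam]
        exact orth_comp_equiv hext E
      · intro j hj
        have hjlt : (j : ℕ) < m := lt_of_lt_of_le hj (Nat.le_add_right i d)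
        rw [hx''lt j hjlt]
        exact hbi j hj

lemma range_subtype_full {r : ℕ} (x : Fin r → C) :
    Set.range (fun b : {b : Fin r // (b : ℕ) < r} => x ↑b) = Set.range x := by
  apply Set.Subset.antisymm
  · rintro _ ⟨⟨b, hb⟩, rfl⟩; exact ⟨b, rfl⟩
  · rintro _ ⟨b, rfl⟩; exact ⟨⟨b, b.2⟩, rfl⟩

end GS

end GramSchmidt

/-- Theorem 2.16, non-Archimedean Gram–Schmidt: if `(C, ℓ)` is an
orthogonalizable `Λ`-space and `x₁, …, x_r` is a basis for a subspace `V ≤ C`, then there is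
an orthogonal ordered basis `x₁', …, x_r'` of `V` with `x_j' = x_j - ∑_{β < j} λ_{j,β} x_β`;
moreover if `(x₁, …, x_i)` is orthogonal then one can take `x_j' = x_j` for `j ≤ i`. -/
theorem nonarchimedean_gram_schmidt
    {Γ : AddSubgroup ℝ} {Λ : Type*} [Field Λ] (NS : NovikovStructure Γ Λ)
    {C : Type*} [AddCommGroup C] [Module Λ C] {ℓ : C → EReal}
    (hC : IsOrthogonalizable NS ℓ)
    {r : ℕ} (x : Fin r → C) (hx : LinearIndependent Λ x) (i : ℕ)
    (hi : IsOrthFamily Λ ℓ (fun j : {j : Fin r // (j : ℕ) < i} => x j)) :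
    ∃ x' : Fin r → C,
      IsOrthFamily Λ ℓ x' ∧
      LinearIndependent Λ x' ∧
      Submodule.span Λ (Set.range x') = Submodule.span Λ (Set.range x) ∧
      (∀ j : Fin r, (j : ℕ) < i → x' j = x j) ∧
      (∀ j : Fin r, ∃ lam : Fin r → Λ,
        x' j = x j - ∑ b : Fin r, if (b : ℕ) < (j : ℕ) then lam b • x b else 0) := by
  classical
  obtain ⟨hN, n, e, he⟩ := hC
  obtain ⟨x', ha, hb, hbi, hc⟩ := GS.main_aux hN e he x i hi r
  have hall : ∀ j : Fin r, (j : ℕ) < i + r := fun j => lt_of_lt_of_le j.2 (Nat.le_add_left r i)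
  have hctri := GS.hctri_of_hc hc
  -- span equality
  have hsp : Submodule.span Λ (Set.range x') = Submodule.span Λ (Set.range x) := by
    have h := GS.tri_span x x' hctri r
    rwa [GS.range_subtype_full x', GS.range_subtype_full x] at h
  refine ⟨x', ?_, ?_, hsp, hbi, hc⟩
  · show IsOrthFamily Λ ℓ x'
    have h := GS.orth_comp_equiv ha (Equiv.subtypeUnivEquiv hall).symm
    exact h
  · rw [linearIndependent_iff_card_eq_finrank_span] at hx ⊢
    rw [hx]
    unfold Set.finrank
    rw [hsp]
end
end

section
/- If (C, ℓ) is an orthogonalizable Λ-space, then: (1) for every subspace W ≤ C, the pair (W, ℓ|_W) is an orthogonalizable Λ-space; (2) for subspaces V ≤ W ≤ C, any orthogonal ordered basis of V may be extended to an orthogonal ordered basis of W; (3) for every subspace U ≤ C there exists a subspace V ≤ C with U ⊕ V = C such that U and V are orthogonal (an orthogonal complement of U). -/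
/-!
Formalization setup following Usher–Zhang, "Persistent homology and Floer–Novikov theory".

We fix an additive subgroup `Γ ≤ ℝ` and abstract the Novikov field `Λ = Λ^{K,Γ}` as a field
`Λ` equipped with a valuation `ν : Λ → ℝ ∪ {∞}` (encoded in `EReal`, with `ν x = ⊤ ↔ x = 0`)
satisfying (V1),(V2),(V3), whose values on nonzero elements lie in (and fill out) `Γ`.

Filtration functions `ℓ : C → ℝ ∪ {-∞}` are encoded as `EReal`-valued functions which never
take the value `⊤`, with `ℓ x = ⊥ ↔ x = 0`.
-/

noncomputable section

/-! ### Auxiliary development -/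

namespace UZAux

open Submodule Set

variable {Γ : AddSubgroup ℝ} {Λ : Type*} [Field Λ] {NS : NovikovStructure Γ Λ}
variable {C : Type*} [AddCommGroup C] [Module Λ C] {ℓ : C → EReal}

/-! #### Valuation lemmas -/

theorem nu_zero : NS.ν 0 = ⊤ := (NS.ν_eq_top_iff 0).2 rfl

theorem nu_real {x : Λ} (hx : x ≠ 0) : ∃ g : ℝ, NS.ν x = (g : EReal) := by
  obtain ⟨g, hg⟩ := NS.ν_mem x hx; exact ⟨g, hg⟩

theorem nu_lt_top {x : Λ} (hx : x ≠ 0) : NS.ν x < ⊤ := by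
  obtain ⟨g, hg⟩ := nu_real (NS := NS) hx
  rw [hg]; exact EReal.coe_lt_top g

theorem nu_one : NS.ν (1 : Λ) = 0 := by
  obtain ⟨g, hg⟩ := nu_real (NS := NS) (one_ne_zero (α := Λ))
  have h := NS.ν_mul 1 1
  rw [mul_one, hg, ← EReal.coe_add] at h
  have hg2 : g = g + g := by exact_mod_cast h
  have : g = 0 := by linarith
  rw [hg, this, EReal.coe_zero]

theorem nu_neg (x : Λ) : NS.ν (-x) = NS.ν x := by
  by_cases hx : x = 0
  · simp [hx]
  · have hm : NS.ν (-1 : Λ) = 0 := by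
      obtain ⟨g, hg⟩ := nu_real (NS := NS) (neg_ne_zero.2 (one_ne_zero (α := Λ)))
      have h := NS.ν_mul (-1) (-1)
      rw [neg_mul_neg, one_mul, nu_one, hg, ← EReal.coe_add] at h
      have hg2 : (0 : ℝ) = g + g := by exact_mod_cast h
      have : g = 0 := by linarith
      rw [hg, this, EReal.coe_zero]
    have : -x = (-1 : Λ) * x := by ring
    rw [this, NS.ν_mul, hm, zero_add]

theorem nu_add_eq_left {x y : Λ} (h : NS.ν x < NS.ν y) : NS.ν (x + y) = NS.ν x := by
  have h1 : NS.ν x ≤ NS.ν (x + y) := by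
    have := NS.min_le_ν_add x y
    rwa [min_eq_left h.le] at this
  have h2 : NS.ν (x + y) ≤ NS.ν x := by
    have hm := NS.min_le_ν_add (x + y) (-y)
    rw [add_neg_cancel_right, nu_neg] at hm
    rcases le_or_gt (NS.ν (x + y)) (NS.ν y) with hc | hc
    · rwa [min_eq_left hc] at hm
    · rw [min_eq_right hc.le] at hm
      exact absurd (lt_of_lt_of_le h hm) (lt_irrefl _)
  exact le_antisymm h2 h1

theorem inf_le_nu_sum {ι : Type*} [DecidableEq ι] (s : Finset ι) (f : ι → Λ) :
    s.inf (fun i => NS.ν (f i)) ≤ NS.ν (∑ i ∈ s, f i) := by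
  induction s using Finset.induction with
  | empty => simp [nu_zero]
  | insert _ _ hnotmem ih =>
    rename_i a s
    rw [Finset.sum_insert hnotmem, Finset.inf_insert]
    refine le_trans ?_ (NS.min_le_ν_add _ _)
    exact le_min (min_le_left _ _) (le_trans (min_le_right _ _) ih)

theorem nu_sum_eq {ι : Type*} [Fintype ι] [DecidableEq ι] (f : ι → Λ) (i0 : ι)
    (h0 : f i0 ≠ 0) (h : ∀ j, j ≠ i0 → NS.ν (f i0) < NS.ν (f j)) :
    NS.ν (∑ j, f j) = NS.ν (f i0) := by
  rw [← Finset.add_sum_erase _ f (Finset.mem_univ i0)]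
  apply nu_add_eq_left
  refine lt_of_lt_of_le ?_ (inf_le_nu_sum _ f)
  rw [Finset.lt_inf_iff (nu_lt_top (NS := NS) h0)]
  intro j hj
  exact h j (Finset.ne_of_mem_erase hj)

/-! #### Filtration lemmas -/

theorem l_zero (hN : IsNonArchNorm NS ℓ) : ℓ 0 = ⊥ := (hN.eq_bot_iff 0).2 rfl

theorem l_neg (hN : IsNonArchNorm NS ℓ) (x : C) : ℓ (-x) = ℓ x := by
  have h := hN.smul_eq (-1) x
  rw [neg_one_smul, nu_neg, nu_one] at h
  simpa using h

theorem l_add_eq_max_of_lt (hN : IsNonArchNorm NS ℓ) {x y : C} (h : ℓ y < ℓ x) :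
    ℓ (x + y) = max (ℓ x) (ℓ y) := by
  rw [max_eq_left h.le]
  have le1 : ℓ (x + y) ≤ ℓ x := (hN.add_le x y).trans_eq (max_eq_left h.le)
  have le2 : ℓ x ≤ max (ℓ (x + y)) (ℓ y) := by
    have := hN.add_le (x + y) (-y)
    rwa [add_neg_cancel_right, l_neg hN] at this
  rcases max_cases (ℓ (x + y)) (ℓ y) with ⟨he, _⟩ | ⟨he, _⟩
  · exact le_antisymm le1 (le2.trans_eq he)
  · rw [he] at le2; exact absurd (lt_of_le_of_lt le2 h) (lt_irrefl _)

theorem l_add_eq_max_of_ne (hN : IsNonArchNorm NS ℓ) {x y : C} (h : ℓ x ≠ ℓ y) :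
    ℓ (x + y) = max (ℓ x) (ℓ y) := by
  rcases lt_or_gt_of_ne h with hlt | hlt
  · rw [add_comm, max_comm]; exact l_add_eq_max_of_lt hN hlt
  · exact l_add_eq_max_of_lt hN hlt

theorem l_sum_le (hN : IsNonArchNorm NS ℓ) {ι : Type*} [DecidableEq ι] (s : Finset ι)
    (f : ι → C) : ℓ (∑ i ∈ s, f i) ≤ s.sup (fun i => ℓ (f i)) := by
  induction s using Finset.induction with
  | empty => simp [l_zero hN]
  | insert _ _ hnotmem ih =>
    rename_i a s
    rw [Finset.sum_insert hnotmem, Finset.sup_insert]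
    exact le_trans (hN.add_le _ _) (max_le_max le_rfl ih)

theorem l_sum_le_iSup (hN : IsNonArchNorm NS ℓ) {ι : Type*} [Fintype ι] [DecidableEq ι]
    (f : ι → C) : ℓ (∑ i, f i) ≤ ⨆ i, ℓ (f i) :=
  (l_sum_le hN _ f).trans (Finset.sup_le fun i _ => le_iSup (fun i => ℓ (f i)) i)

theorem l_smul_sub (hN : IsNonArchNorm NS ℓ) {a b : Λ} (x : C)
    (h : NS.ν a ≤ NS.ν b) : ℓ (b • x) ≤ ℓ (a • x) := by
  rw [hN.smul_eq, hN.smul_eq]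
  exact EReal.sub_le_sub le_rfl h

theorem nu_lt_of_l_smul_lt (hN : IsNonArchNorm NS ℓ) {a b : Λ} {x : C}
    (h : ℓ (a • x) < ℓ (b • x)) : NS.ν b < NS.ν a := by
  by_contra hc
  exact absurd (lt_of_lt_of_le h (l_smul_sub hN x (not_lt.1 hc))) (lt_irrefl _)

end UZAux

namespace UZAux
open Submodule Set

variable {Γ : AddSubgroup ℝ} {Λ : Type*} [Field Λ] {NS : NovikovStructure Γ Λ}
variable {C : Type*} [AddCommGroup C] [Module Λ C] {ℓ : C → EReal}

/-! #### Generic `Fin` and lattice helpers -/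

theorem iSup_fin_snoc {m : ℕ} (F : Fin (m + 1) → EReal) :
    (⨆ k, F k) = (⨆ k : Fin m, F k.castSucc) ⊔ F (Fin.last m) := by
  apply le_antisymm
  · refine iSup_le fun k => ?_
    induction k using Fin.lastCases with
    | last => exact le_sup_right
    | cast i => exact le_trans (le_iSup (fun k : Fin m => F k.castSucc) i) le_sup_left
  · exact sup_le (iSup_le fun i => le_iSup F i.castSucc) (le_iSup F (Fin.last m))

theorem range_snoc {α : Type*} {n : ℕ} (f : Fin n → α) (x : α) :
    Set.range (Fin.snoc f x) = insert x (Set.range f) := by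
  ext a
  simp only [Set.mem_range, Set.mem_insert_iff]
  constructor
  · rintro ⟨k, rfl⟩
    induction k using Fin.lastCases with
    | last => left; simp
    | cast i => right; exact ⟨i, by simp⟩
  · rintro (rfl | ⟨i, rfl⟩)
    · exact ⟨Fin.last n, by simp⟩
    · exact ⟨i.castSucc, by simp⟩

theorem snoc_injective {α : Type*} {n : ℕ} {f : Fin n → α} {x : α}
    (hf : Function.Injective f) (hx : x ∉ Set.range f) :
    Function.Injective (Fin.snoc f x) := by
  intro k l hkl
  induction k using Fin.lastCases with
  | last =>
    induction l using Fin.lastCases with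
    | last => rfl
    | cast j =>
      rw [Fin.snoc_last, Fin.snoc_castSucc] at hkl
      exact absurd ⟨j, hkl.symm⟩ hx
  | cast i =>
    induction l using Fin.lastCases with
    | last =>
      rw [Fin.snoc_last, Fin.snoc_castSucc] at hkl
      exact absurd ⟨i, hkl⟩ hx
    | cast j =>
      rw [Fin.snoc_castSucc, Fin.snoc_castSucc] at hkl
      rw [hf hkl]

/-! #### Coordinates w.r.t. an orthogonal basis -/

variable {n : ℕ} {b : Module.Basis (Fin n) Λ C}

theorem l_repr (hb : IsOrthFamily Λ ℓ ⇑b) (x : C) :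
    ℓ x = ⨆ i, ℓ (b.repr x i • b i) := by
  conv_lhs => rw [← Module.Basis.sum_repr b x]
  exact hb _

theorem l_coord_le (hb : IsOrthFamily Λ ℓ ⇑b) (x : C) (i : Fin n) :
    ℓ (b.repr x i • b i) ≤ ℓ x := by
  rw [l_repr hb x]
  exact le_iSup (fun i => ℓ (b.repr x i • b i)) i

theorem exists_dominant (hN : IsNonArchNorm NS ℓ) (hb : IsOrthFamily Λ ℓ ⇑b) {x : C}
    (hx : x ≠ 0) : ∃ i, b.repr x i ≠ 0 ∧ ℓ x = ℓ (b.repr x i • b i) := by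
  have hrep : b.repr x ≠ 0 := fun h => hx (by simpa using congrArg b.repr.symm h)
  obtain ⟨j, hj⟩ := Finsupp.ne_iff.1 hrep
  haveI : Nonempty (Fin n) := ⟨j⟩
  obtain ⟨i, hi⟩ := exists_eq_ciSup_of_finite (f := fun i => ℓ (b.repr x i • b i))
  rw [← l_repr hb x] at hi
  refine ⟨i, ?_, hi.symm⟩
  intro h0
  rw [h0, zero_smul, l_zero hN] at hi
  exact hx ((hN.eq_bot_iff x).1 hi.symm)

/-! #### Pivotal families -/

/-- A *pivotal family* for a subspace `V`, w.r.t. an orthogonal basis `b` of the ambient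
space: an ordered spanning family `v` of `V` together with distinct pivot coordinates `p k`
such that later vectors vanish at earlier pivots, each vector's pivot coordinate is nonzero
and realizes its filtration level, and every vector of `C` can be corrected by an element of
`V` to vanish at all pivots. -/
structure Pivotal (ℓ : C → EReal) (b : Module.Basis (Fin n) Λ C) (r : ℕ) (v : Fin r → C)
    (p : Fin r → Fin n) (V : Submodule Λ C) : Prop where
  inj : Function.Injective p
  spanning : Submodule.span Λ (Set.range v) = V
  tri : ∀ {k l : Fin r}, k < l → b.repr (v l) (p k) = 0
  nz : ∀ k, b.repr (v k) (p k) ≠ 0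
  dom : ∀ k, ℓ (v k) = ℓ (b.repr (v k) (p k) • b (p k))
  approx : ∀ y : C, ∃ z ∈ V, ∀ k, b.repr (y - z) (p k) = 0

theorem Pivotal.v_ne_zero {r : ℕ} {v : Fin r → C} {p : Fin r → Fin n} {V : Submodule Λ C}
    (hp : Pivotal ℓ b r v p V) (k : Fin r) : v k ≠ 0 := by
  intro h
  exact hp.nz k (by rw [h, map_zero, Finsupp.coe_zero, Pi.zero_apply])

theorem Pivotal.orth (hN : IsNonArchNorm NS ℓ) (hb : IsOrthFamily Λ ℓ ⇑b)
    {r : ℕ} {v : Fin r → C} {p : Fin r → Fin n} {V : Submodule Λ C}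
    (hp : Pivotal ℓ b r v p V) : IsOrthFamily Λ ℓ v := by
  intro a
  by_cases hall : ∀ k, a k = 0
  · have h1 : ∀ k, a k • v k = (0 : C) := fun k => by rw [hall k, zero_smul]
    simp only [h1]
    rw [Finset.sum_const_zero, l_zero hN]
    exact le_antisymm bot_le (iSup_le fun k => by simp [l_zero hN])
  push_neg at hall
  obtain ⟨kw, hkw⟩ := hall
  haveI : Nonempty (Fin r) := ⟨kw⟩
  set M := ⨆ k, ℓ (a k • v k) with hM
  have hMbot : M ≠ ⊥ := by
    intro hbot
    have : ℓ (a kw • v kw) ≤ ⊥ := hbot ▸ le_iSup (fun k => ℓ (a k • v k)) kw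
    have hz : a kw • v kw = 0 := (hN.eq_bot_iff _).1 (le_bot_iff.1 this)
    rcases smul_eq_zero.1 hz with h | h
    · exact hkw h
    · exact hp.v_ne_zero kw h
  obtain ⟨katt, hkatt⟩ := exists_eq_ciSup_of_finite (f := fun k => ℓ (a k • v k))
  classical
  set s : Finset (Fin r) := Finset.univ.filter (fun k => ℓ (a k • v k) = M) with hs
  have hsne : s.Nonempty := ⟨katt, by simp [hs, hkatt]; exact hM.symm⟩
  set k0 := s.min' hsne with hk0
  have hk0M : ℓ (a k0 • v k0) = M := by
    have := s.min'_mem hsne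
    simpa [hs] using this
  have hlt : ∀ k, k < k0 → ℓ (a k • v k) < M := by
    intro k hk
    have hne : ℓ (a k • v k) ≠ M := by
      intro he
      have : k0 ≤ k := s.min'_le k (by simp [hs, he])
      exact absurd hk (not_lt.2 this)
    exact lt_of_le_of_ne (le_iSup (fun k => ℓ (a k • v k)) k) hne
  have ha0 : a k0 ≠ 0 := by
    intro h0
    rw [h0, zero_smul, l_zero hN] at hk0M
    exact hMbot hk0M.symm
  -- the coefficient functions at the pivot row of `k0`
  set i0 := p k0 with hi0
  set f : Fin r → Λ := fun k => a k * b.repr (v k) i0 with hf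
  have hcoord : b.repr (∑ k, a k • v k) i0 = ∑ k, f k := by
    rw [map_sum, Finsupp.coe_finset_sum, Finset.sum_apply]
    refine Finset.sum_congr rfl fun k _ => ?_
    rw [map_smul, Finsupp.smul_apply, smul_eq_mul]
  have hterm : ∀ k, ℓ (a k • v k) = ℓ (f k • b i0) → ℓ (f k • b i0) = ℓ (a k • v k) :=
    fun k h => h.symm
  -- `ℓ (a k0 • v k0) = ℓ (f k0 • b i0)`
  have hk0f : ℓ (a k0 • v k0) = ℓ (f k0 • b i0) := by
    rw [hf]
    have : ℓ (a k0 • v k0) = ℓ (v k0) - NS.ν (a k0) := hN.smul_eq _ _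
    rw [this, hp.dom k0, ← hN.smul_eq (a k0) (b.repr (v k0) (p k0) • b (p k0)),
      smul_smul, hi0]
  have hfk0 : f k0 ≠ 0 := mul_ne_zero ha0 (hp.nz k0)
  have hnu : NS.ν (∑ k, f k) = NS.ν (f k0) := by
    apply nu_sum_eq f k0 hfk0
    intro j hj
    rcases lt_or_gt_of_ne hj with hjk | hjk
    · -- j < k0 : strict inequality of levels
      have h1 : ℓ (f j • b i0) ≤ ℓ (a j • v j) := by
        have : f j • b i0 = b.repr (a j • v j) i0 • b i0 := by
          rw [hf, map_smul, Finsupp.smul_apply, smul_eq_mul]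
        rw [this]
        exact l_coord_le hb (a j • v j) i0
      have h2 : ℓ (f j • b i0) < ℓ (f k0 • b i0) := by
        rw [← hk0f, hk0M]
        exact lt_of_le_of_lt h1 (hlt j hjk)
      exact nu_lt_of_l_smul_lt hN h2
    · -- k0 < j : the coordinate vanishes
      have : b.repr (v j) i0 = 0 := hp.tri hjk
      rw [hf]
      simp only [this, mul_zero]
      rw [nu_zero]
      exact nu_lt_top hfk0
  apply le_antisymm (l_sum_le_iSup hN _)
  calc (M : EReal) = ℓ (f k0 • b i0) := by rw [← hk0M, hk0f]
    _ = ℓ ((∑ k, f k) • b i0) := by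
        rw [hN.smul_eq, hN.smul_eq, hnu]
    _ = ℓ (b.repr (∑ k, a k • v k) i0 • b i0) := by rw [hcoord]
    _ ≤ ℓ (∑ k, a k • v k) := l_coord_le hb _ i0

end UZAux

namespace UZAux
open Submodule Set

variable {Γ : AddSubgroup ℝ} {Λ : Type*} [Field Λ] {NS : NovikovStructure Γ Λ}
variable {C : Type*} [AddCommGroup C] [Module Λ C] {ℓ : C → EReal}
variable {n : ℕ} {b : Module.Basis (Fin n) Λ C}

/-- Extending a pivotal family by a vector whose coordinates vanish at all pivots. -/
theorem pivotal_snoc (hN : IsNonArchNorm NS ℓ) (hb : IsOrthFamily Λ ℓ ⇑b)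
    {r : ℕ} {v : Fin r → C} {p : Fin r → Fin n} {V : Submodule Λ C}
    (hp : Pivotal ℓ b r v p V) {y' : C} (hy0 : y' ≠ 0)
    (hcoords : ∀ k, b.repr y' (p k) = 0) :
    ∃ i', Pivotal ℓ b (r + 1) (Fin.snoc v y') (Fin.snoc p i')
      (V ⊔ Submodule.span Λ {y'}) := by
  obtain ⟨i', hi'nz, hi'dom⟩ := exists_dominant hN hb hy0
  have hi'range : i' ∉ Set.range p := by
    rintro ⟨k, rfl⟩
    exact hi'nz (hcoords k)
  refine ⟨i', ?_⟩
  constructor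
  · exact snoc_injective hp.inj hi'range
  · rw [range_snoc, Submodule.span_insert, hp.spanning, sup_comm]
  · intro k l hkl
    induction l using Fin.lastCases with
    | last =>
      have hk : k.val < r := by simpa [Fin.lt_def] using hkl
      rw [← Fin.castSucc_castLT k hk, Fin.snoc_castSucc, Fin.snoc_last]
      exact hcoords (k.castLT hk)
    | cast j =>
      have hk : k.val < r := by
        have := Fin.lt_def.1 hkl; simp at this; omega
      have hkj : k.castLT hk < j := by
        rw [Fin.lt_def]
        have := Fin.lt_def.1 hkl; simpa using this
      rw [← Fin.castSucc_castLT k hk, Fin.snoc_castSucc, Fin.snoc_castSucc]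
      exact hp.tri hkj
  · intro k
    induction k using Fin.lastCases with
    | last => simpa [Fin.snoc_last] using hi'nz
    | cast i => simpa [Fin.snoc_castSucc] using hp.nz i
  · intro k
    induction k using Fin.lastCases with
    | last => simpa [Fin.snoc_last] using hi'dom
    | cast i => simpa [Fin.snoc_castSucc] using hp.dom i
  · intro y₁
    obtain ⟨z, hzV, hz⟩ := hp.approx y₁
    set μ := b.repr (y₁ - z) i' / b.repr y' i' with hμ
    refine ⟨z + μ • y', ?_, ?_⟩
    · exact add_mem (Submodule.mem_sup_left hzV)
        (Submodule.mem_sup_right (Submodule.smul_mem _ _ (Submodule.mem_span_singleton_self y')))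
    · intro k
      have hrepr : b.repr (y₁ - (z + μ • y')) = b.repr (y₁ - z) - μ • b.repr y' := by
        rw [← map_smul, ← map_sub, sub_add_eq_sub_sub]
      induction k using Fin.lastCases with
      | last =>
        rw [Fin.snoc_last, hrepr, Finsupp.sub_apply, Finsupp.smul_apply, smul_eq_mul, hμ,
          div_mul_cancel₀ _ hi'nz, sub_self]
      | cast i =>
        rw [Fin.snoc_castSucc, hrepr, Finsupp.sub_apply, Finsupp.smul_apply, smul_eq_mul,
          hz i, hcoords i, mul_zero, sub_zero]

/-- A vector with vanishing coordinates at all pivots of `V` is orthogonal to `V`. -/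
theorem orth_vec_subspace (hN : IsNonArchNorm NS ℓ) (hb : IsOrthFamily Λ ℓ ⇑b)
    {r : ℕ} {v : Fin r → C} {p : Fin r → Fin n} {V : Submodule Λ C}
    (hp : Pivotal ℓ b r v p V) {y' : C} (hy0 : y' ≠ 0)
    (hcoords : ∀ k, b.repr y' (p k) = 0) :
    ∀ w ∈ V, ℓ (y' + w) = max (ℓ y') (ℓ w) := by
  obtain ⟨i', hps⟩ := pivotal_snoc hN hb hp hy0 hcoords
  have horth := hps.orth hN hb
  intro w hw
  rw [← hp.spanning] at hw
  obtain ⟨cf, hcf⟩ := (mem_span_range_iff_exists_fun Λ).1 hw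
  have hsum : ∑ k, (Fin.snoc cf (1 : Λ) : Fin (r+1) → Λ) k • (Fin.snoc v y' : Fin (r+1) → C) k = w + y' := by
    rw [Fin.sum_univ_castSucc]
    simp only [Fin.snoc_castSucc, Fin.snoc_last, one_smul]
    rw [hcf]
  have key := horth (Fin.snoc cf (1 : Λ))
  rw [hsum] at key
  rw [iSup_fin_snoc] at key
  simp only [Fin.snoc_castSucc, Fin.snoc_last, one_smul] at key
  rw [← hp.orth hN hb cf, hcf] at key
  rw [add_comm, key, max_comm]

/-- Appending a vector orthogonal to a subspace containing the span of an orthogonal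
family preserves orthogonality. -/
theorem orth_snoc (hN : IsNonArchNorm NS ℓ) {m : ℕ} {c : Fin m → C}
    (hc : IsOrthFamily Λ ℓ c) {V : Submodule Λ C}
    (hsp : Submodule.span Λ (Set.range c) ≤ V) {y : C}
    (hy : ∀ w ∈ V, ℓ (y + w) = max (ℓ y) (ℓ w)) :
    IsOrthFamily Λ ℓ (Fin.snoc c y) := by
  intro a
  have hsum : ∑ k, a k • Fin.snoc c y k
      = (∑ k : Fin m, a k.castSucc • c k) + a (Fin.last m) • y := by
    rw [Fin.sum_univ_castSucc]
    simp only [Fin.snoc_castSucc, Fin.snoc_last]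
  set u := ∑ k : Fin m, a k.castSucc • c k with hu
  have huV : u ∈ V := by
    apply hsp
    exact Submodule.sum_mem _ fun k _ =>
      Submodule.smul_mem _ _ (Submodule.subset_span (Set.mem_range_self k))
  have hmain : ℓ (u + a (Fin.last m) • y) = max (ℓ (a (Fin.last m) • y)) (ℓ u) := by
    by_cases h0 : a (Fin.last m) = 0
    · rw [h0, zero_smul, add_zero, l_zero hN, max_bot_left]
    · have huV' : (a (Fin.last m))⁻¹ • u ∈ V := Submodule.smul_mem _ _ huV
      have : u + a (Fin.last m) • y = a (Fin.last m) • (y + (a (Fin.last m))⁻¹ • u) := by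
        rw [smul_add, smul_inv_smul₀ h0, add_comm]
      rw [this, hN.smul_eq, hy _ huV', ]
      have hmax : max (ℓ y) (ℓ ((a (Fin.last m))⁻¹ • u)) - NS.ν (a (Fin.last m))
          = max (ℓ y - NS.ν (a (Fin.last m)))
              (ℓ ((a (Fin.last m))⁻¹ • u) - NS.ν (a (Fin.last m))) := by
        exact Monotone.map_max (f := fun t => t - NS.ν (a (Fin.last m)))
          (fun s t hst => EReal.sub_le_sub hst le_rfl)
      rw [hmax, ← hN.smul_eq, ← hN.smul_eq, smul_inv_smul₀ h0]
  rw [hsum, hmain, iSup_fin_snoc]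
  simp only [Fin.snoc_castSucc, Fin.snoc_last]
  rw [hu, hc (fun k => a k.castSucc), sup_comm]

/-- An orthogonal family of nonzero vectors is linearly independent. -/
theorem orth_li (hN : IsNonArchNorm NS ℓ) {m : ℕ} {c : Fin m → C}
    (hc : IsOrthFamily Λ ℓ c) (h0 : ∀ k, c k ≠ 0) : LinearIndependent Λ c := by
  rw [Fintype.linearIndependent_iff]
  intro g hg k
  have := hc g
  rw [hg, l_zero hN] at this
  have hk : ℓ (g k • c k) ≤ ⊥ := this ▸ le_iSup (fun k => ℓ (g k • c k)) k
  have hz : g k • c k = 0 := (hN.eq_bot_iff _).1 (le_bot_iff.1 hk)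
  rcases smul_eq_zero.1 hz with h | h
  · exact h
  · exact absurd h (h0 k)

end UZAux

namespace UZAux
open Submodule Set

variable {Γ : AddSubgroup ℝ} {Λ : Type*} [Field Λ] {NS : NovikovStructure Γ Λ}
variable {C : Type*} [AddCommGroup C] [Module Λ C] {ℓ : C → EReal}
variable {n : ℕ} {b : Module.Basis (Fin n) Λ C}

theorem pivotal_bot : Pivotal ℓ b 0 Fin.elim0 Fin.elim0 (⊥ : Submodule Λ C) := by
  constructor
  · intro k; exact k.elim0
  · rw [Set.range_eq_empty, Submodule.span_empty]
  · intro k; exact k.elim0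
  · intro k; exact k.elim0
  · intro k; exact k.elim0
  · intro y; exact ⟨0, Submodule.zero_mem _, fun k => k.elim0⟩

theorem orth_empty (hN : IsNonArchNorm NS ℓ) : IsOrthFamily Λ ℓ (Fin.elim0 : Fin 0 → C) := by
  intro a
  rw [Finset.univ_eq_empty, Finset.sum_empty, l_zero hN, iSup_of_empty]

/-- The main extension lemma, by induction on the codimension bound `k`. -/
theorem main_ext (hN : IsNonArchNorm NS ℓ) (hb : IsOrthFamily Λ ℓ ⇑b) (k : ℕ) :
    ∀ (V W : Submodule Λ C), V ≤ W →
      Module.finrank Λ W ≤ Module.finrank Λ V + k →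
      ∀ {m : ℕ} {c : Fin m → C}, IsOrthFamily Λ ℓ c → (∀ j, c j ≠ 0) →
        Submodule.span Λ (Set.range c) = V →
      ∀ {r : ℕ} {v : Fin r → C} {p : Fin r → Fin n}, Pivotal ℓ b r v p V →
      ∃ (m' : ℕ) (h : m ≤ m') (c' : Fin m' → C),
        IsOrthFamily Λ ℓ c' ∧ (∀ j, c' j ≠ 0) ∧
        Submodule.span Λ (Set.range c') = W ∧
        (∀ j : Fin m, c' (Fin.castLE h j) = c j) ∧
        ∃ (r' : ℕ) (v' : Fin r' → C) (p' : Fin r' → Fin n), Pivotal ℓ b r' v' p' W := by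
  haveI : FiniteDimensional Λ C := Module.Finite.of_basis b
  induction k with
  | zero =>
    intro V W hVW hrank m c hc hc0 hspan r v p hp
    have hVW' : V = W := Submodule.eq_of_le_of_finrank_le hVW (by simpa using hrank)
    exact ⟨m, le_rfl, c, hc, hc0, hVW' ▸ hspan, fun j => congrArg c (Fin.ext rfl),
      r, v, p, hVW' ▸ hp⟩
  | succ k ih =>
    intro V W hVW hrank m c hc hc0 hspan r v p hp
    by_cases hWV : W ≤ V
    · have hVW' : V = W := le_antisymm hVW hWV
      exact ⟨m, le_rfl, c, hc, hc0, hVW' ▸ hspan, fun j => congrArg c (Fin.ext rfl),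
        r, v, p, hVW' ▸ hp⟩
    · obtain ⟨y, hyW, hyV⟩ := SetLike.exists_of_lt (lt_of_le_of_ne hVW (fun h => hWV h.ge))
      obtain ⟨z, hzV, hz⟩ := hp.approx y
      set y' := y - z with hy'
      have hy'0 : y' ≠ 0 := by
        intro h
        have hyz : y = z := by rwa [hy', sub_eq_zero] at h
        exact hyV (hyz ▸ hzV)
      have hy'V : y' ∉ V := by
        intro h
        apply hyV
        rw [← sub_add_cancel y z]
        exact Submodule.add_mem _ h hzV
      obtain ⟨i', hps⟩ := pivotal_snoc hN hb hp hy'0 hz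
      set V₁ := V ⊔ Submodule.span Λ {y'} with hV₁
      have hV₁W : V₁ ≤ W := sup_le hVW (by
        rw [Submodule.span_le, Set.singleton_subset_iff]
        exact Submodule.sub_mem _ hyW (hVW hzV))
      have hVV₁ : V < V₁ := lt_of_le_of_ne le_sup_left (fun h => hy'V (by
        rw [h]; exact Submodule.mem_sup_right (Submodule.mem_span_singleton_self y')))
      have hrank₁ : Module.finrank Λ W ≤ Module.finrank Λ V₁ + k := by
        have h1 : Module.finrank Λ V < Module.finrank Λ V₁ :=
          Submodule.finrank_lt_finrank_of_lt hVV₁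
        omega
      have hc₁ : IsOrthFamily Λ ℓ (Fin.snoc c y' : Fin (m+1) → C) :=
        orth_snoc hN hc (le_of_eq hspan) (orth_vec_subspace hN hb hp hy'0 hz)
      have hc₁0 : ∀ j : Fin (m+1), (Fin.snoc c y' : Fin (m+1) → C) j ≠ 0 := by
        intro j
        induction j using Fin.lastCases with
        | last => rw [Fin.snoc_last]; exact hy'0
        | cast i => rw [Fin.snoc_castSucc]; exact hc0 i
      have hspan₁ : Submodule.span Λ (Set.range (Fin.snoc c y' : Fin (m+1) → C)) = V₁ := by
        rw [range_snoc, Submodule.span_insert, hspan, sup_comm]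
      obtain ⟨m', h1, c', hc', hc'0, hspan', hext, hpiv'⟩ :=
        ih V₁ W hV₁W hrank₁ hc₁ hc₁0 hspan₁ hps
      refine ⟨m', le_trans (Nat.le_succ m) h1, c', hc', hc'0, hspan', ?_, hpiv'⟩
      intro j
      have : Fin.castLE (le_trans (Nat.le_succ m) h1) j
          = Fin.castLE h1 (Fin.castLE (Nat.le_succ m) j) := by
        rw [Fin.castLE_castLE]
      rw [this, hext]
      have : Fin.castLE (Nat.le_succ m) j = Fin.castSucc j := rfl
      rw [this, Fin.snoc_castSucc]

end UZAux

namespace UZAux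
open Submodule Set

variable {Γ : AddSubgroup ℝ} {Λ : Type*} [Field Λ] {NS : NovikovStructure Γ Λ}
variable {C : Type*} [AddCommGroup C] [Module Λ C] {ℓ : C → EReal}
variable {n : ℕ} {b : Module.Basis (Fin n) Λ C}

theorem mem_span_image_iff_coeff {N : ℕ} {c : Fin N → C} {S : Set (Fin N)} {x : C} :
    x ∈ Submodule.span Λ (c '' S) ↔
      ∃ a : Fin N → Λ, (∀ j, j ∉ S → a j = 0) ∧ ∑ j, a j • c j = x := by
  classical
  constructor
  · intro hx
    induction hx using Submodule.span_induction with
    | mem z hz =>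
      obtain ⟨j, hjS, rfl⟩ := hz
      refine ⟨Pi.single j 1, fun i hi => ?_, ?_⟩
      · refine Pi.single_eq_of_ne (fun h => hi ?_) 1
        rw [h]; exact hjS
      · rw [Finset.sum_eq_single j]
        · rw [Pi.single_eq_same, one_smul]
        · intro i _ hij
          rw [Pi.single_eq_of_ne hij, zero_smul]
        · intro h; exact absurd (Finset.mem_univ j) h
    | zero => exact ⟨0, fun j _ => rfl, by simp⟩
    | add u w hu hw hu' hw' =>
      obtain ⟨a1, ha1, hs1⟩ := hu'
      obtain ⟨a2, ha2, hs2⟩ := hw'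
      refine ⟨a1 + a2, fun j hj => ?_, ?_⟩
      · rw [Pi.add_apply, ha1 j hj, ha2 j hj, add_zero]
      · rw [← hs1, ← hs2, ← Finset.sum_add_distrib]
        exact Finset.sum_congr rfl fun j _ => by rw [Pi.add_apply, add_smul]
    | smul t u hu hu' =>
      obtain ⟨a, ha, hs⟩ := hu'
      refine ⟨t • a, fun j hj => ?_, ?_⟩
      · rw [Pi.smul_apply, ha j hj, smul_zero]
      · rw [← hs, Finset.smul_sum]
        exact Finset.sum_congr rfl fun j _ => by simp [Pi.smul_apply, smul_smul]
  · rintro ⟨a, ha, rfl⟩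
    refine Submodule.sum_mem _ fun j _ => ?_
    by_cases hj : j ∈ S
    · exact Submodule.smul_mem _ _ (Submodule.subset_span (Set.mem_image_of_mem c hj))
    · rw [ha j hj, zero_smul]; exact Submodule.zero_mem _

theorem areOrth_span_image (hN : IsNonArchNorm NS ℓ) {N : ℕ} {c : Fin N → C}
    (hc : IsOrthFamily Λ ℓ c) (S : Set (Fin N)) :
    AreOrthogonal ℓ (Submodule.span Λ (c '' S)) (Submodule.span Λ (c '' Sᶜ)) := by
  classical
  intro u hu w hw
  obtain ⟨a, ha, hau⟩ := mem_span_image_iff_coeff.1 hu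
  obtain ⟨d, hd, hdw⟩ := mem_span_image_iff_coeff.1 hw
  have hsum : u + w = ∑ j, (a j + d j) • c j := by
    rw [← hau, ← hdw, ← Finset.sum_add_distrib]
    exact Finset.sum_congr rfl fun j _ => by rw [add_smul]
  have hterm : ∀ j, ℓ ((a j + d j) • c j) = max (ℓ (a j • c j)) (ℓ (d j • c j)) := by
    intro j
    by_cases hj : j ∈ S
    · rw [hd j (by simpa using hj), add_zero, zero_smul, l_zero hN, max_bot_right]
    · rw [ha j hj, zero_add, zero_smul, l_zero hN, max_bot_left]
  rw [hsum, hc]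
  simp only [hterm]
  rw [iSup_sup_eq, ← hc a, ← hc d, hau, hdw]

theorem restrict_nonarch (hN : IsNonArchNorm NS ℓ) (W : Submodule Λ C) :
    IsNonArchNorm NS (fun w : ↥W => ℓ (w : C)) := by
  constructor
  · exact fun x => (hN.eq_bot_iff (x : C)).trans Submodule.coe_eq_zero
  · exact fun x => hN.ne_top (x : C)
  · intro a x
    have := hN.smul_eq a (x : C)
    simpa using this
  · intro x y
    have := hN.add_le (x : C) (y : C)
    simpa using this

theorem subspace_basis (hN : IsNonArchNorm NS ℓ) {W : Submodule Λ C} {s : ℕ}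
    {c : Fin s → C} (hli : LinearIndependent Λ c) (hc : IsOrthFamily Λ ℓ c)
    (hspan : Submodule.span Λ (Set.range c) = W) :
    ∃ B : Module.Basis (Fin s) Λ ↥W, IsOrthFamily Λ (fun w : ↥W => ℓ (w : C)) ⇑B := by
  let B : Module.Basis (Fin s) Λ ↥W := (Module.Basis.span hli).map (LinearEquiv.ofEq _ _ hspan)
  have hBc : ∀ j, ((B j : ↥W) : C) = c j := by
    intro j
    show ((LinearEquiv.ofEq _ _ hspan ((Module.Basis.span hli) j) : ↥W) : C) = c j
    rw [LinearEquiv.coe_ofEq_apply, Module.Basis.span_apply]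
  refine ⟨B, fun a => ?_⟩
  have h2 : ∀ i, ((a i • B i : ↥W) : C) = a i • c i := by
    intro i
    rw [SetLike.val_smul, hBc]
  show ℓ (((∑ i, a i • B i : ↥W) : C)) = ⨆ i, ℓ ((a i • B i : ↥W) : C)
  rw [Submodule.coe_sum]
  simp only [h2]
  exact hc a

end UZAux


/-- Corollaries 2.17, 2.18, 2.19: in an orthogonalizable `Λ`-space `(C,ℓ)`:
(1) every subspace `W` with the restricted filtration is an orthogonalizable `Λ`-space;
(2) for `V ≤ W ≤ C`, any orthogonal ordered basis of `V` extends to an orthogonal ordered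
basis of `W`; (3) every subspace `U` admits an orthogonal complement `V` (so `U ⊕ V = C`
with `U`, `V` orthogonal). -/
theorem orthogonalizable_subspace_extend_complement
    {Γ : AddSubgroup ℝ} {Λ : Type*} [Field Λ] (NS : NovikovStructure Γ Λ)
    {C : Type*} [AddCommGroup C] [Module Λ C] {ℓ : C → EReal}
    (hC : IsOrthogonalizable NS ℓ) :
    (∀ W : Submodule Λ C, IsOrthogonalizable NS fun w : ↥W => ℓ (w : C)) ∧
    (∀ V W : Submodule Λ C, V ≤ W → ∀ (md : ℕ) (b : Fin md → C),
      IsOrthFamily Λ ℓ b → LinearIndependent Λ b → Submodule.span Λ (Set.range b) = V →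
      ∃ (nd : ℕ) (h : md ≤ nd) (c : Fin nd → C),
        IsOrthFamily Λ ℓ c ∧ LinearIndependent Λ c ∧
        Submodule.span Λ (Set.range c) = W ∧
        ∀ j : Fin md, c (Fin.castLE h j) = b j) ∧
    (∀ U : Submodule Λ C, ∃ V : Submodule Λ C, IsCompl U V ∧ AreOrthogonal ℓ U V) := by
  classical
  obtain ⟨hN, n, b, hb⟩ := hC
  haveI : FiniteDimensional Λ C := Module.Finite.of_basis b
  -- every subspace admits an orthogonal spanning family together with a pivotal family
  have famW : ∀ W : Submodule Λ C, ∃ (s : ℕ) (c : Fin s → C),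
      IsOrthFamily Λ ℓ c ∧ (∀ j, c j ≠ 0) ∧ Submodule.span Λ (Set.range c) = W ∧
      ∃ (r : ℕ) (v : Fin r → C) (p : Fin r → Fin n), UZAux.Pivotal ℓ b r v p W := by
    intro W
    obtain ⟨m', _, c', hc', hc'0, hspan', _, hpiv⟩ :=
      UZAux.main_ext hN hb (Module.finrank Λ W) ⊥ W bot_le
        (by simp [finrank_bot]) (UZAux.orth_empty hN) (fun j => j.elim0)
        (by rw [Set.range_eq_empty, Submodule.span_empty]) UZAux.pivotal_bot
    exact ⟨m', c', hc', hc'0, hspan', hpiv⟩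
  refine ⟨?_, ?_, ?_⟩
  · -- (1) subspaces are orthogonalizable
    intro W
    obtain ⟨s, c, hc, hc0, hspan, -⟩ := famW W
    obtain ⟨B, hB⟩ := UZAux.subspace_basis hN (UZAux.orth_li hN hc hc0) hc hspan
    exact ⟨UZAux.restrict_nonarch hN W, s, B, hB⟩
  · -- (2) extension of orthogonal families
    intro V W hVW md bb hbborth hbbli hbbspan
    obtain ⟨-, -, -, -, -, ⟨r, v, p, hp⟩⟩ := famW V
    obtain ⟨m', h, c', hc', hc'0, hspan', hext, -⟩ :=
      UZAux.main_ext hN hb (Module.finrank Λ W) V W hVW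
        (Nat.le_add_left _ _) hbborth (fun j => hbbli.ne_zero j) hbbspan hp
    exact ⟨m', h, c', hc', UZAux.orth_li hN hc' hc'0, hspan', hext⟩
  · -- (3) orthogonal complements
    intro U
    obtain ⟨s, c, hc, hc0, hspan, ⟨r, v, p, hp⟩⟩ := famW U
    obtain ⟨m', h, c', hc', hc'0, hspan', hext, -⟩ :=
      UZAux.main_ext hN hb (Module.finrank Λ (⊤ : Submodule Λ C)) U ⊤ le_top
        (Nat.le_add_left _ _) hc hc0 hspan hp
    set S : Set (Fin m') := Set.range (Fin.castLE h) with hS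
    have hU : U = Submodule.span Λ (c' '' S) := by
      rw [← hspan]
      congr 1
      rw [hS, ← Set.range_comp]
      exact (congrArg Set.range (funext hext)).symm
    refine ⟨Submodule.span Λ (c' '' Sᶜ), ?_, ?_⟩
    · rw [isCompl_iff]
      constructor
      · rw [hU]
        exact (UZAux.orth_li hN hc' hc'0).disjoint_span_image disjoint_compl_right
      · rw [codisjoint_iff, hU, ← Submodule.span_union, ← Set.image_union,
          Set.union_compl_self, Set.image_univ, hspan']
    · rw [hU]
      exact UZAux.areOrth_span_image hN hc' S
end
end

section
/- If (C, ℓ) is an orthogonalizable Λ-space with orthogonal ordered basis (v_1, …, v_n), then the dual space (C*, ℓ*) is an orthogonalizable Λ-space with orthogonal ordered basis given by the dual basis (v_1*, …, v_n*), and moreover ℓ*(v_i*) = −ℓ(v_i) for each i. -/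
/-!
Formalization setup following Usher–Zhang, "Persistent homology and Floer–Novikov theory".

We fix an additive subgroup `Γ ≤ ℝ` and abstract the Novikov field `Λ = Λ^{K,Γ}` as a field
`Λ` equipped with a valuation `ν : Λ → ℝ ∪ {∞}` (encoded in `EReal`, with `ν x = ⊤ ↔ x = 0`)
satisfying (V1),(V2),(V3), whose values on nonzero elements lie in (and fill out) `Γ`.

Filtration functions `ℓ : C → ℝ ∪ {-∞}` are encoded as `EReal`-valued functions which never
take the value `⊤`, with `ℓ x = ⊥ ↔ x = 0`.
-/

noncomputable section

/-- The dual filtration function `ℓ*(φ) = sup_{0 ≠ x ∈ C} (-ℓ(x) - ν(φ(x)))` on the dual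
space `C* = Hom_Λ(C, Λ)` (Section 2.4). -/
noncomputable def dualFilt {Γ : AddSubgroup ℝ} {Λ : Type*} [Field Λ]
    (NS : NovikovStructure Γ Λ) {C : Type*} [AddCommGroup C] [Module Λ C]
    (ℓ : C → EReal) (φ : Module.Dual Λ C) : EReal :=
  ⨆ x : {x : C // x ≠ 0}, (-(ℓ (x : C)) - NS.ν (φ (x : C)))


section UZHelpers

variable {Γ : AddSubgroup ℝ} {Λ : Type*} [Field Λ] (NS : NovikovStructure Γ Λ)
variable {C : Type*} [AddCommGroup C] [Module Λ C] {ℓ : C → EReal}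

lemma UZ_nu_zero : NS.ν 0 = ⊤ := (NS.ν_eq_top_iff 0).mpr rfl

lemma UZ_nu_ne_bot (x : Λ) : NS.ν x ≠ ⊥ := by
  by_cases h : x = 0
  · rw [h, UZ_nu_zero]; exact top_ne_bot
  · obtain ⟨g, hg⟩ := NS.ν_mem x h
    rw [hg]; exact EReal.coe_ne_bot _

lemma UZ_nu_one : NS.ν 1 = 0 := by
  obtain ⟨g, hg⟩ := NS.ν_mem (1 : Λ) one_ne_zero
  have h := NS.ν_mul (1 : Λ) 1
  rw [mul_one, hg] at h
  have h2 : (g : ℝ) = g + g := by exact_mod_cast h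
  have h3 : (g : ℝ) = 0 := by linarith
  rw [hg, h3]; rfl

lemma UZ_sub_add_real (x y : EReal) (r : ℝ) (hy : y ≠ ⊥) :
    x - ((r : EReal) + y) = (x - y) - (r : EReal) := by
  rw [sub_eq_add_neg, sub_eq_add_neg, sub_eq_add_neg,
    EReal.neg_add (Or.inl (EReal.coe_ne_bot r)) (Or.inr hy), sub_eq_add_neg,
    add_comm (-(r : EReal)) (-y), ← add_assoc]

lemma UZ_isup_sub_coe {ι : Type*} [Fintype ι] (f : ι → EReal) (r : ℝ) :
    (⨆ i, (f i - (r : EReal))) = (⨆ i, f i) - (r : EReal) := by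
  rcases isEmpty_or_nonempty ι with h | h
  · rw [iSup_of_empty, iSup_of_empty, sub_eq_add_neg, EReal.bot_add]
  · obtain ⟨i, hi⟩ := Finite.exists_max f
    have h1 : (⨆ j, f j) = f i := le_antisymm (iSup_le hi) (le_iSup f i)
    have h2 : (⨆ j, f j - (r : EReal)) = f i - (r : EReal) := by
      refine le_antisymm (iSup_le fun j => ?_) (le_iSup (fun j => f j - (r : EReal)) i)
      simp only [sub_eq_add_neg]
      exact add_le_add_left (hi j) _
    rw [h1, h2]

lemma UZ_nu_sum_le {ι : Type*} [DecidableEq ι] (s : Finset ι) (f : ι → Λ) (b : EReal)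
    (h : ∀ i ∈ s, b ≤ NS.ν (f i)) : b ≤ NS.ν (∑ i ∈ s, f i) := by
  induction s using Finset.induction_on with
  | empty => rw [Finset.sum_empty, UZ_nu_zero]; exact le_top
  | insert _ _ hnot ih =>
    rename_i a s
    rw [Finset.sum_insert hnot]
    refine le_trans (le_min (h a (Finset.mem_insert_self a s))
      (ih fun i hi => h i (Finset.mem_insert_of_mem hi))) ?_
    exact NS.min_le_ν_add _ _

/-- Key formula: on an orthogonalizable space, the dual filtration is computed on the
values of `φ` on the orthogonal basis. -/
lemma UZ_dualFilt_apply (hna : IsNonArchNorm NS ℓ) {n : ℕ} (v : Module.Basis (Fin n) Λ C)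
    (hv : IsOrthFamily Λ ℓ ⇑v) (φ : Module.Dual Λ C) :
    dualFilt NS ℓ φ = ⨆ i, (-(ℓ (v i)) - NS.ν (φ (v i))) := by
  apply le_antisymm
  · apply iSup_le
    rintro ⟨x, hx⟩
    dsimp only
    by_cases hφx : φ x = 0
    · rw [hφx, UZ_nu_zero, EReal.sub_top]; exact bot_le
    · haveI hne' : Nonempty (Fin n) := by
        by_contra hcon
        rw [not_nonempty_iff] at hcon
        apply hx
        have hsr := v.sum_repr x
        rw [Finset.univ_eq_empty, Finset.sum_empty] at hsr
        exact hsr.symm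
      set c : Fin n → Λ := fun i => v.repr x i with hc
      have hxc : ∑ i, c i • v i = x := v.sum_repr x
      have hφsum : φ x = ∑ i, c i * φ (v i) := by
        conv_lhs => rw [← hxc]
        rw [map_sum]
        simp [smul_eq_mul]
      obtain ⟨i₀, hi₀⟩ := Finite.exists_min (fun i => NS.ν (c i * φ (v i)))
      have hνφx : NS.ν (c i₀) + NS.ν (φ (v i₀)) ≤ NS.ν (φ x) := by
        rw [← NS.ν_mul, hφsum]
        exact UZ_nu_sum_le NS _ _ _ (fun i _ => hi₀ i)
      have hνtop : NS.ν (φ x) ≠ ⊤ := fun h => hφx ((NS.ν_eq_top_iff _).mp h)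
      have hc0 : c i₀ ≠ 0 := by
        intro h
        refine hνtop (top_le_iff.mp (le_trans ?_ hνφx))
        rw [h, UZ_nu_zero, EReal.top_add_of_ne_bot (UZ_nu_ne_bot NS _)]
      have hφv0 : φ (v i₀) ≠ 0 := by
        intro h
        refine hνtop (top_le_iff.mp (le_trans ?_ hνφx))
        rw [h, UZ_nu_zero, EReal.add_top_of_ne_bot (UZ_nu_ne_bot NS _)]
      obtain ⟨gt, hgt⟩ := NS.ν_mem _ hc0
      obtain ⟨gs, hgs⟩ := NS.ν_mem _ hφv0
      obtain ⟨gr, hgr⟩ := NS.ν_mem _ hφx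
      have hℓx_bot : ℓ x ≠ ⊥ := fun h => hx ((hna.eq_bot_iff x).mp h)
      have hLx : (((ℓ x).toReal : ℝ) : EReal) = ℓ x := EReal.coe_toReal (hna.ne_top x) hℓx_bot
      set L : ℝ := (ℓ x).toReal with hL
      have hvi_bot : ℓ (v i₀) ≠ ⊥ := fun h => (v.ne_zero i₀) ((hna.eq_bot_iff _).mp h)
      have hA : ((((ℓ (v i₀)).toReal) : ℝ) : EReal) = ℓ (v i₀) :=
        EReal.coe_toReal (hna.ne_top _) hvi_bot
      set A : ℝ := (ℓ (v i₀)).toReal with hAdef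
      have hlow : (A : EReal) - ((gt : ℝ) : EReal) ≤ ℓ x := by
        calc (A : EReal) - ((gt : ℝ) : EReal) = ℓ (v i₀) - NS.ν (c i₀) := by rw [hA, hgt]
          _ = ℓ (c i₀ • v i₀) := (hna.smul_eq _ _).symm
          _ ≤ ⨆ i, ℓ (c i • v i) := le_iSup (fun i => ℓ (c i • v i)) i₀
          _ = ℓ x := by rw [← hv c, hxc]
      rw [← hLx] at hlow
      have h2 : A - (gt : ℝ) ≤ L := by exact_mod_cast hlow
      rw [hgt, hgs, hgr] at hνφx
      have h3 : (gt : ℝ) + (gs : ℝ) ≤ (gr : ℝ) := by exact_mod_cast hνφx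
      refine le_trans ?_ (le_iSup (fun i => -(ℓ (v i)) - NS.ν (φ (v i))) i₀)
      rw [← hLx, ← hA, hgr, hgs]
      have h4 : -L - (gr : ℝ) ≤ -A - (gs : ℝ) := by linarith
      exact_mod_cast h4
  · apply iSup_le
    intro i
    exact le_iSup (fun x : {x : C // x ≠ 0} => -(ℓ (x : C)) - NS.ν (φ (x : C))) ⟨v i, v.ne_zero i⟩

lemma UZ_dualFilt_smul_dualBasis (hna : IsNonArchNorm NS ℓ) {n : ℕ} (v : Module.Basis (Fin n) Λ C)
    (hv : IsOrthFamily Λ ℓ ⇑v) (a : Λ) (i : Fin n) :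
    dualFilt NS ℓ (a • v.dualBasis i) = -(ℓ (v i)) - NS.ν a := by
  rw [UZ_dualFilt_apply NS hna v hv]
  have hfi : -(ℓ (v i)) - NS.ν ((a • v.dualBasis i) (v i)) = -(ℓ (v i)) - NS.ν a := by
    rw [LinearMap.smul_apply, v.dualBasis_apply_self, if_pos rfl, smul_eq_mul, mul_one]
  apply le_antisymm
  · apply iSup_le
    intro j
    by_cases h : j = i
    · subst h; rw [hfi]
    · rw [LinearMap.smul_apply, v.dualBasis_apply_self, if_neg h, smul_zero, UZ_nu_zero,
        EReal.sub_top]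
      exact bot_le
  · rw [← hfi]
    exact le_iSup (fun j => -(ℓ (v j)) - NS.ν ((a • v.dualBasis i) (v j))) i

lemma UZ_dualFilt_sum (hna : IsNonArchNorm NS ℓ) {n : ℕ} (v : Module.Basis (Fin n) Λ C)
    (hv : IsOrthFamily Λ ℓ ⇑v) (a : Fin n → Λ) :
    dualFilt NS ℓ (∑ i, a i • v.dualBasis i) = ⨆ i, (-(ℓ (v i)) - NS.ν (a i)) := by
  rw [UZ_dualFilt_apply NS hna v hv]
  have key : ∀ i, (∑ j, a j • v.dualBasis j) (v i) = a i := by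
    intro i
    rw [LinearMap.sum_apply]
    simp [Finsupp.single_apply]
  simp only [key]

end UZHelpers

/-- Proposition 2.20: if `(C, ℓ)` is an orthogonalizable `Λ`-space with
orthogonal ordered basis `(v₁, …, vₙ)`, then `(C*, ℓ*)` is an orthogonalizable `Λ`-space
with orthogonal ordered basis the dual basis `(v₁*, …, vₙ*)`, and `ℓ*(vᵢ*) = -ℓ(vᵢ)`. -/
theorem dual_basis_orthogonal
    {Γ : AddSubgroup ℝ} {Λ : Type*} [Field Λ] (NS : NovikovStructure Γ Λ)
    {C : Type*} [AddCommGroup C] [Module Λ C] {ℓ : C → EReal}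
    (hna : IsNonArchNorm NS ℓ) {n : ℕ} (v : Module.Basis (Fin n) Λ C)
    (hv : IsOrthFamily Λ ℓ ⇑v) :
    IsOrthogonalizable NS (dualFilt NS ℓ) ∧
    IsOrthFamily Λ (dualFilt NS ℓ) (fun i : Fin n => v.dualBasis i) ∧
    ∀ i : Fin n, dualFilt NS ℓ (v.dualBasis i) = -ℓ (v i) := by
  have key := UZ_dualFilt_apply NS hna v hv
  have hsmul := UZ_dualFilt_smul_dualBasis NS hna v hv
  have hsum := UZ_dualFilt_sum NS hna v hv
  have hbasis : ∀ i : Fin n, dualFilt NS ℓ (v.dualBasis i) = -ℓ (v i) := by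
    intro i
    have h := hsmul 1 i
    rwa [one_smul, UZ_nu_one, sub_zero] at h
  have horth : IsOrthFamily Λ (dualFilt NS ℓ) (fun i : Fin n => v.dualBasis i) := by
    intro a
    have h1 : dualFilt NS ℓ (∑ i, a i • (fun i : Fin n => v.dualBasis i) i)
        = ⨆ i, (-(ℓ (v i)) - NS.ν (a i)) := hsum a
    rw [h1]
    exact iSup_congr fun i => (hsmul (a i) i).symm
  refine ⟨⟨⟨?_, ?_, ?_, ?_⟩, n, v.dualBasis, horth⟩, horth, hbasis⟩
  · -- eq_bot_iff
    intro φ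
    rw [key φ, iSup_eq_bot]
    constructor
    · intro h
      refine Module.Basis.ext v fun i => ?_
      have hi := h i
      rw [sub_eq_add_neg, EReal.add_eq_bot_iff] at hi
      rcases hi with hi | hi
      · exact absurd (EReal.neg_eq_bot_iff.mp hi) (hna.ne_top (v i))
      · rw [LinearMap.zero_apply]
        exact (NS.ν_eq_top_iff _).mp (EReal.neg_eq_bot_iff.mp hi)
    · intro h i
      rw [h, LinearMap.zero_apply, UZ_nu_zero, EReal.sub_top]
  · -- ne_top
    intro φ
    rw [key φ]
    rcases isEmpty_or_nonempty (Fin n) with h | h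
    · rw [iSup_of_empty]; exact bot_ne_top
    · obtain ⟨i, hi⟩ := Finite.exists_max (fun i => -(ℓ (v i)) - NS.ν (φ (v i)))
      intro htop
      have hle : (⊤ : EReal) ≤ -(ℓ (v i)) - NS.ν (φ (v i)) := htop ▸ iSup_le hi
      have hne : -(ℓ (v i)) - NS.ν (φ (v i)) ≠ ⊤ := by
        rw [sub_eq_add_neg]
        refine ne_top_of_lt (EReal.add_lt_top ?_ ?_)
        · rw [Ne, EReal.neg_eq_top_iff]
          exact fun hb => (v.ne_zero i) ((hna.eq_bot_iff _).mp hb)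
        · rw [Ne, EReal.neg_eq_top_iff]
          exact UZ_nu_ne_bot NS _
      exact hne (top_le_iff.mp hle)
  · -- smul_eq
    intro a φ
    rw [key φ, key (a • φ)]
    have happ : ∀ i, (a • φ) (v i) = a * φ (v i) := fun i => rfl
    by_cases ha : a = 0
    · subst ha
      have hterm : ∀ i : Fin n, -(ℓ (v i)) - NS.ν (((0 : Λ) • φ) (v i)) = (⊥ : EReal) := by
        intro i
        rw [happ i, zero_mul, UZ_nu_zero, EReal.sub_top]
      simp only [hterm]
      rw [UZ_nu_zero, EReal.sub_top, iSup_eq_bot]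
      exact fun i => rfl
    · obtain ⟨g, hg⟩ := NS.ν_mem a ha
      have hterm : ∀ i : Fin n, -(ℓ (v i)) - NS.ν ((a • φ) (v i))
          = (-(ℓ (v i)) - NS.ν (φ (v i))) - ((g : ℝ) : EReal) := by
        intro i
        rw [happ i, NS.ν_mul, hg, UZ_sub_add_real _ _ _ (UZ_nu_ne_bot NS _)]
      simp only [hterm]
      rw [hg]
      exact UZ_isup_sub_coe _ _
  · -- add_le
    intro φ ψ
    rw [key φ, key ψ, key (φ + ψ)]
    apply iSup_le
    intro i
    have h1 : min (NS.ν (φ (v i))) (NS.ν (ψ (v i))) ≤ NS.ν ((φ + ψ) (v i)) := by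
      rw [LinearMap.add_apply]
      exact NS.min_le_ν_add _ _
    have h2 : -(ℓ (v i)) - NS.ν ((φ + ψ) (v i))
        ≤ -(ℓ (v i)) - min (NS.ν (φ (v i))) (NS.ν (ψ (v i))) := by
      simp only [sub_eq_add_neg]
      exact add_le_add_right (EReal.neg_le_neg_iff.mpr h1) _
    refine h2.trans ?_
    rcases le_total (NS.ν (φ (v i))) (NS.ν (ψ (v i))) with h | h
    · rw [min_eq_left h]
      exact le_max_of_le_left (le_iSup (fun i => -(ℓ (v i)) - NS.ν (φ (v i))) i)
    · rw [min_eq_right h]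
      exact le_max_of_le_right (le_iSup (fun i => -(ℓ (v i)) - NS.ν (ψ (v i))) i)
end
end

section
/- If (C, ℓ_C) and (D, ℓ_D) are orthogonalizable Λ-spaces, then every Λ-linear map A : C → D admits a singular value decomposition. -/
/-!
Formalization setup following Usher–Zhang, "Persistent homology and Floer–Novikov theory".

We fix an additive subgroup `Γ ≤ ℝ` and abstract the Novikov field `Λ = Λ^{K,Γ}` as a field
`Λ` equipped with a valuation `ν : Λ → ℝ ∪ {∞}` (encoded in `EReal`, with `ν x = ⊤ ↔ x = 0`)
satisfying (V1),(V2),(V3), whose values on nonzero elements lie in (and fill out) `Γ`.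

Filtration functions `ℓ : C → ℝ ∪ {-∞}` are encoded as `EReal`-valued functions which never
take the value `⊤`, with `ℓ x = ⊥ ↔ x = 0`.
-/

noncomputable section

/-- A singular value decomposition (Definition 3.1) of a linear map `A : C → D` between
orthogonalizable `Λ`-spaces: orthogonal ordered bases `(y₁,…,yₙ)` of `C` and `(x₁,…,xₘ)`
of `D` such that `(y_{r+1},…,yₙ)` is an orthogonal ordered basis of `ker A`,
`(x₁,…,x_r)` is an orthogonal ordered basis of `Im A`, `A yᵢ = xᵢ` for `i ≤ r`, and
`ℓ_C(y₁) - ℓ_D(x₁) ≥ … ≥ ℓ_C(y_r) - ℓ_D(x_r)`; here `r` is the rank of `A`. -/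
def IsSVD {Λ : Type*} [Field Λ] {C D : Type*} [AddCommGroup C] [Module Λ C]
    [AddCommGroup D] [Module Λ D] (ℓC : C → EReal) (ℓD : D → EReal) (A : C →ₗ[Λ] D)
    {r n m : ℕ} (hrn : r ≤ n) (hrm : r ≤ m)
    (y : Module.Basis (Fin n) Λ C) (x : Module.Basis (Fin m) Λ D) : Prop :=
  IsOrthFamily Λ ℓC ⇑y ∧
  IsOrthFamily Λ ℓD ⇑x ∧
  (∀ i : Fin r, A (y (Fin.castLE hrn i)) = x (Fin.castLE hrm i)) ∧
  (∀ i : Fin n, r ≤ (i : ℕ) → A (y i) = 0) ∧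
  LinearMap.ker A = Submodule.span Λ (⇑y '' {i : Fin n | r ≤ (i : ℕ)}) ∧
  LinearMap.range A = Submodule.span Λ (⇑x '' {i : Fin m | (i : ℕ) < r}) ∧
  (∀ i j : Fin r, i ≤ j →
    ℓC (y (Fin.castLE hrn j)) - ℓD (x (Fin.castLE hrm j)) ≤
      ℓC (y (Fin.castLE hrn i)) - ℓD (x (Fin.castLE hrm i)))

section Toolkit

open EReal

variable {Γ : AddSubgroup ℝ} {Λ : Type*} [Field Λ] {NS : NovikovStructure Γ Λ}
variable {C : Type*} [AddCommGroup C] [Module Λ C] {ℓ : C → EReal}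

lemma nu_ne_bot (a : Λ) : NS.ν a ≠ ⊥ := by
  by_cases h : a = 0
  · simp [h, (NS.ν_eq_top_iff 0).2 rfl]
  · obtain ⟨g, hg⟩ := NS.ν_mem a h
    simp [hg]

lemma nu_exists_real {a : Λ} (h : a ≠ 0) : ∃ r : ℝ, NS.ν a = (r : EReal) := by
  obtain ⟨g, hg⟩ := NS.ν_mem a h
  exact ⟨g, hg⟩

lemma nu_one : NS.ν (1 : Λ) = 0 := by
  obtain ⟨r, hr⟩ := nu_exists_real (NS := NS) (one_ne_zero (α := Λ))
  have h := NS.ν_mul 1 1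
  rw [one_mul, hr, ← EReal.coe_add, EReal.coe_eq_coe_iff] at h
  have : r = 0 := by linarith
  rw [hr, this]; rfl

lemma nu_neg_one : NS.ν (-1 : Λ) = 0 := by
  obtain ⟨r, hr⟩ := nu_exists_real (NS := NS) (neg_ne_zero.2 (one_ne_zero (α := Λ)))
  have h := NS.ν_mul (-1) (-1)
  rw [neg_mul_neg, one_mul, nu_one, hr, ← EReal.coe_add, ← EReal.coe_zero,
    EReal.coe_eq_coe_iff] at h
  have : r = 0 := by linarith
  rw [hr, this]; rfl

lemma nu_inv {a : Λ} (h : a ≠ 0) : NS.ν a⁻¹ = - NS.ν a := by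
  obtain ⟨r, hr⟩ := nu_exists_real (NS := NS) h
  obtain ⟨s, hs⟩ := nu_exists_real (NS := NS) (inv_ne_zero h)
  have hmul := NS.ν_mul a a⁻¹
  rw [mul_inv_cancel₀ h, nu_one, hr, hs, ← EReal.coe_add, ← EReal.coe_zero,
    EReal.coe_eq_coe_iff] at hmul
  rw [hr, hs, ← EReal.coe_neg, EReal.coe_eq_coe_iff]
  linarith

lemma nu_neg (a : Λ) : NS.ν (-a) = NS.ν a := by
  have := NS.ν_mul (-1) a
  rw [neg_one_mul, nu_neg_one, zero_add] at this
  exact this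

section NormLemmas

variable (hl : IsNonArchNorm NS ℓ)
include hl

lemma l_zero : ℓ 0 = ⊥ := (hl.eq_bot_iff 0).2 rfl

lemma l_neg (x : C) : ℓ (-x) = ℓ x := by
  have := hl.smul_eq (-1) x
  rw [neg_one_smul, nu_neg_one, sub_zero] at this
  exact this

lemma l_sub_le (x y : C) : ℓ (x - y) ≤ max (ℓ x) (ℓ y) := by
  rw [sub_eq_add_neg]
  simpa [l_neg hl] using hl.add_le x (-y)

lemma l_sum_le {ι : Type*} (s : Finset ι) (f : ι → C) :
    ℓ (∑ i ∈ s, f i) ≤ ⨆ i ∈ s, ℓ (f i) := by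
  classical
  induction s using Finset.induction_on with
  | empty => simp [l_zero hl]
  | @insert a s ha ih =>
    rw [Finset.sum_insert ha]
    refine (hl.add_le _ _).trans ?_
    refine max_le ?_ (ih.trans ?_)
    · exact le_biSup (fun i => ℓ (f i)) (Finset.mem_insert_self a s)
    · exact iSup_le fun i => iSup_le fun hi =>
        le_biSup (fun i => ℓ (f i)) (Finset.mem_insert_of_mem hi)

lemma l_sum_le' {ι : Type*} [Fintype ι] (f : ι → C) :
    ℓ (∑ i, f i) ≤ ⨆ i, ℓ (f i) := by
  refine (l_sum_le hl Finset.univ f).trans ?_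
  exact iSup_le fun i => iSup_le fun _ => le_iSup (fun i => ℓ (f i)) i

end NormLemmas

end Toolkit
section Orth

open EReal

variable {Γ : AddSubgroup ℝ} {Λ : Type*} [Field Λ] {NS : NovikovStructure Γ Λ}
variable {C : Type*} [AddCommGroup C] [Module Λ C] {ℓ : C → EReal}

lemma isup_fin_succ {n : ℕ} (f : Fin (n + 1) → EReal) :
    ⨆ i, f i = f 0 ⊔ ⨆ i : Fin n, f i.succ := by
  apply le_antisymm
  · refine iSup_le fun i => ?_
    induction i using Fin.cases with
    | zero => exact le_sup_left
    | succ k => exact le_sup_of_le_right (le_iSup (fun i : Fin n => f i.succ) k)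
  · exact sup_le (le_iSup f 0) (iSup_le fun i => le_iSup f i.succ)

lemma orth_reindex {ι ι' : Type*} [Fintype ι] [Fintype ι'] {b : ι → C}
    (hb : IsOrthFamily Λ ℓ b) (e : ι' ≃ ι) : IsOrthFamily Λ ℓ (b ∘ e) := by
  intro a
  have h1 : ∑ i, a i • (b ∘ e) i = ∑ j, a (e.symm j) • b j := by
    rw [← Equiv.sum_comp e (fun j => a (e.symm j) • b j)]
    simp
  have h2 : (⨆ i, ℓ (a i • (b ∘ e) i)) = ⨆ j, ℓ (a (e.symm j) • b j) := by
    rw [← Equiv.iSup_comp (e := e) (g := fun j => ℓ (a (e.symm j) • b j))]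
    simp
  rw [h1, h2, hb]

/-- Splitting the orthogonality relation of a `Fin (n+1)`-indexed family. -/
lemma orth_split {n : ℕ} {v : Fin (n + 1) → C} (hv : IsOrthFamily Λ ℓ v)
    (a : Λ) (b : Fin n → Λ) :
    ℓ (a • v 0 + ∑ j, b j • v j.succ) =
      max (ℓ (a • v 0)) (⨆ j, ℓ (b j • v j.succ)) := by
  have := hv (Fin.cons a b)
  rw [Fin.sum_univ_succ] at this
  simp only [Fin.cons_zero, Fin.cons_succ] at this
  rw [this]
  have h2 := isup_fin_succ (fun i => ℓ ((Fin.cons a b : Fin (n+1) → Λ) i • v i))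
  simp only [Fin.cons_zero, Fin.cons_succ] at h2
  exact h2

lemma orth_tail {n : ℕ} {v : Fin (n + 1) → C} (hl : IsNonArchNorm NS ℓ)
    (hv : IsOrthFamily Λ ℓ v) : IsOrthFamily Λ ℓ (v ∘ Fin.succ) := by
  intro a
  have := orth_split hv 0 a
  simpa [l_zero hl] using this

end Orth
section Perturb

open EReal

variable {Γ : AddSubgroup ℝ} {Λ : Type*} [Field Λ] {NS : NovikovStructure Γ Λ}
variable {C : Type*} [AddCommGroup C] [Module Λ C] {ℓ : C → EReal}

lemma orth_pair {ι : Type*} [Fintype ι] [DecidableEq ι] (hl : IsNonArchNorm NS ℓ)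
    {v : ι → C} (hv : IsOrthFamily Λ ℓ v) {j k : ι} (hjk : j ≠ k) (α β : Λ) :
    ℓ (α • v j + β • v k) = max (ℓ (α • v j)) (ℓ (β • v k)) := by
  set a : ι → Λ := fun i => if i = j then α else if i = k then β else 0 with ha
  have hsum : ∑ i, a i • v i = α • v j + β • v k := by
    rw [Finset.sum_eq_add_of_mem j k (Finset.mem_univ j) (Finset.mem_univ k) hjk]
    · simp [ha, hjk.symm]
    · intro c _ hc
      simp [ha, hc.1, hc.2]
  have hsup : (⨆ i, ℓ (a i • v i)) = max (ℓ (α • v j)) (ℓ (β • v k)) := by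
    apply le_antisymm
    · refine iSup_le fun i => ?_
      by_cases h1 : i = j
      · subst h1; simp [ha]
      · by_cases h2 : i = k
        · subst h2; simp [ha, h1]
        · simp [ha, h1, h2, l_zero hl]
    · refine max_le ?_ ?_
      · have := le_iSup (fun i => ℓ (a i • v i)) j
        simpa [ha] using this
      · have := le_iSup (fun i => ℓ (a i • v i)) k
        simpa [ha, hjk.symm] using this
  rw [← hsum, ← hsup, hv a]

/-- Column operations: adding suitable multiples of `v 0` to the other members of an
orthogonal family preserves orthogonality. -/
lemma orth_colop {n : ℕ} (hl : IsNonArchNorm NS ℓ) {v : Fin (n + 1) → C}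
    (hv : IsOrthFamily Λ ℓ v) (c : Fin (n + 1) → Λ) (hc0 : c 0 = 0)
    (hle : ∀ j, ℓ (c j • v 0) ≤ ℓ (v j)) :
    IsOrthFamily Λ ℓ (fun j => v j + c j • v 0) := by
  intro a
  classical
  set lam : Λ := ∑ j, a j * c j with hlam
  set a' : Fin (n + 1) → Λ := Fin.cons (a 0 + lam) (fun k => a k.succ) with ha'
  set T : EReal := ⨆ k : Fin n, ℓ (a k.succ • v k.succ) with hT
  have hsum : ∑ j, a j • (v j + c j • v 0) = ∑ j, a' j • v j := by
    have h1 : ∑ j, a j • (v j + c j • v 0) = (∑ j, a j • v j) + lam • v 0 := by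
      simp only [smul_add, Finset.sum_add_distrib, hlam, Finset.sum_smul, smul_smul]
    rw [h1]
    simp only [ha', Fin.sum_univ_succ, Fin.cons_zero, Fin.cons_succ, add_smul]
    abel
  have hlam_le : ℓ (lam • v 0) ≤ T := by
    have h1 : lam • v 0 = ∑ j, (a j * c j) • v 0 := by rw [hlam, Finset.sum_smul]
    rw [h1]
    refine (l_sum_le' hl _).trans ?_
    rw [isup_fin_succ (f := fun j => ℓ ((a j * c j) • v 0))]
    refine max_le ?_ (iSup_le fun k => ?_)
    · simp [hc0, l_zero hl]
    · have h2 : ℓ ((a k.succ * c k.succ) • v 0) = ℓ (c k.succ • v 0) - NS.ν (a k.succ) := by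
        rw [mul_smul, hl.smul_eq]
      have h3 : ℓ (a k.succ • v k.succ) = ℓ (v k.succ) - NS.ν (a k.succ) := hl.smul_eq _ _
      calc ℓ ((a k.succ * c k.succ) • v 0) ≤ ℓ (v k.succ) - NS.ν (a k.succ) := by
            rw [h2]; exact EReal.sub_le_sub (hle _) le_rfl
        _ = ℓ (a k.succ • v k.succ) := h3.symm
        _ ≤ T := le_iSup (fun k : Fin n => ℓ (a k.succ • v k.succ)) k
  have hRHS : (⨆ j, ℓ (a j • (v j + c j • v 0))) = max (ℓ (a 0 • v 0)) T := by
    rw [isup_fin_succ (f := fun j => ℓ (a j • (v j + c j • v 0)))]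
    congr 1
    · simp [hc0]
    · rw [hT]
      congr 1; funext k
      have hp : ℓ ((1 : Λ) • v k.succ + c k.succ • v 0) =
          max (ℓ ((1 : Λ) • v k.succ)) (ℓ (c k.succ • v 0)) :=
        orth_pair hl hv (Fin.succ_ne_zero k) 1 (c k.succ)
      rw [one_smul] at hp
      have hz : ℓ (v k.succ + c k.succ • v 0) = ℓ (v k.succ) := by
        rw [hp]; exact max_eq_left (hle _)
      rw [hl.smul_eq, hl.smul_eq, hz]
  have hLHS : ℓ (∑ j, a j • (v j + c j • v 0)) = max (ℓ ((a 0 + lam) • v 0)) T := by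
    rw [hsum, hv a', isup_fin_succ (f := fun j => ℓ (a' j • v j))]
    simp only [ha', Fin.cons_zero, Fin.cons_succ, hT]
  rw [hLHS, hRHS]
  have h_add : ℓ ((a 0 + lam) • v 0) ≤ max (ℓ (a 0 • v 0)) (ℓ (lam • v 0)) := by
    rw [add_smul]; exact hl.add_le _ _
  have h_sub : ℓ (a 0 • v 0) ≤ max (ℓ ((a 0 + lam) • v 0)) (ℓ (lam • v 0)) := by
    have : a 0 • v 0 = (a 0 + lam) • v 0 - lam • v 0 := by rw [add_smul]; abel
    rw [this]; exact l_sub_le hl _ _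
  apply le_antisymm
  · refine sup_le (h_add.trans ?_) le_sup_right
    exact sup_le le_sup_left (hlam_le.trans le_sup_right)
  · refine sup_le (h_sub.trans ?_) le_sup_right
    exact sup_le le_sup_left (hlam_le.trans le_sup_right)

/-- Pivot-column operation: replacing `w 0` by a combination `u = ∑ d i • w i` whose dominant
term is `d 0 • w 0` preserves orthogonality. -/
lemma orth_pivot {m : ℕ} (hl : IsNonArchNorm NS ℓ) {w : Fin (m + 1) → C}
    (hw : IsOrthFamily Λ ℓ w) (d : Fin (m + 1) → Λ)
    (hle : ∀ i, ℓ (d i • w i) ≤ ℓ (d 0 • w 0)) :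
    IsOrthFamily Λ ℓ (Fin.cons (∑ i, d i • w i) (w ∘ Fin.succ)) := by
  classical
  set u : C := ∑ i, d i • w i with hu
  set W : Fin (m + 1) → C := Fin.cons u (w ∘ Fin.succ) with hW
  intro a
  show ℓ (∑ i, a i • W i) = ⨆ i, ℓ (a i • W i)
  set a' : Fin (m + 1) → Λ := Fin.cons (a 0 * d 0) (fun k => a k.succ + a 0 * d k.succ)
    with ha'
  have hlu : ℓ u = ℓ (d 0 • w 0) := by
    rw [hu, hw d]
    exact le_antisymm (iSup_le hle) (le_iSup (fun i => ℓ (d i • w i)) 0)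
  have hkey : ∀ b : Λ, ℓ ((b * d 0) • w 0) = ℓ (b • u) := by
    intro b
    rw [mul_smul, hl.smul_eq b (d 0 • w 0), hl.smul_eq b u, hlu]
  have hsum : ∑ i, a i • W i = ∑ i, a' i • w i := by
    rw [Fin.sum_univ_succ (f := fun i => a i • W i)]
    simp only [hW, Fin.cons_zero, Fin.cons_succ, Function.comp_apply]
    rw [hu, Finset.smul_sum, Fin.sum_univ_succ (f := fun i => a 0 • (d i • w i))]
    simp only [ha', Fin.sum_univ_succ (f := fun i => a' i • w i), Fin.cons_zero,
      Fin.cons_succ, smul_smul, add_smul, Finset.sum_add_distrib]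
    rw [Fin.sum_univ_succ]
    simp only [Fin.cons_zero, Fin.cons_succ, add_smul, Finset.sum_add_distrib]
    abel
  have hbound : ∀ k : Fin m, ℓ ((a 0 * d k.succ) • w k.succ) ≤ ℓ (a' 0 • w 0) := by
    intro k
    have h1 : ℓ ((a 0 * d k.succ) • w k.succ) = ℓ (d k.succ • w k.succ) - NS.ν (a 0) := by
      rw [mul_smul, hl.smul_eq]
    have h2 : ℓ (a' 0 • w 0) = ℓ (d 0 • w 0) - NS.ν (a 0) := by
      show ℓ ((a 0 * d 0) • w 0) = _
      rw [mul_smul, hl.smul_eq]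
    rw [h1, h2]
    exact EReal.sub_le_sub (hle _) le_rfl
  have htails : (ℓ (a' 0 • w 0) ⊔ ⨆ k : Fin m, ℓ (a' k.succ • w k.succ)) =
      ℓ (a' 0 • w 0) ⊔ ⨆ k : Fin m, ℓ (a k.succ • w k.succ) := by
    apply le_antisymm
    · refine sup_le le_sup_left (iSup_le fun k => ?_)
      have h3 : a' k.succ • w k.succ = a k.succ • w k.succ + (a 0 * d k.succ) • w k.succ := by
        simp [ha', add_smul]
      rw [h3]
      refine (hl.add_le _ _).trans (sup_le ?_ ((hbound k).trans le_sup_left))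
      exact le_sup_of_le_right (le_iSup (fun k : Fin m => ℓ (a k.succ • w k.succ)) k)
    · refine sup_le le_sup_left (iSup_le fun k => ?_)
      have h3 : a k.succ • w k.succ = a' k.succ • w k.succ - (a 0 * d k.succ) • w k.succ := by
        simp [ha', add_smul]
      rw [h3]
      refine (l_sub_le hl _ _).trans (sup_le ?_ ((hbound k).trans le_sup_left))
      exact le_sup_of_le_right (le_iSup (fun k : Fin m => ℓ (a' k.succ • w k.succ)) k)
  calc ℓ (∑ i, a i • W i)
      = ℓ (∑ i, a' i • w i) := by rw [hsum]
    _ = ⨆ i, ℓ (a' i • w i) := hw a'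
    _ = ℓ (a' 0 • w 0) ⊔ ⨆ k : Fin m, ℓ (a' k.succ • w k.succ) :=
        isup_fin_succ (f := fun i => ℓ (a' i • w i))
    _ = ℓ (a' 0 • w 0) ⊔ ⨆ k : Fin m, ℓ (a k.succ • w k.succ) := htails
    _ = ℓ (a 0 • u) ⊔ ⨆ k : Fin m, ℓ (a k.succ • w k.succ) := by
        rw [show a' 0 = a 0 * d 0 from rfl, hkey]
    _ = ⨆ i, ℓ (a i • W i) := by
        rw [isup_fin_succ (f := fun i => ℓ (a i • W i))]
        simp [hW]

end Perturb
section Wrapper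

open EReal

variable {Λ : Type*} [Field Λ] {C D : Type*} [AddCommGroup C] [Module Λ C]
  [AddCommGroup D] [Module Λ D]

/-- Preliminary SVD data: like `IsSVD` but with singular values sorted increasingly and
without the kernel/range conditions (which are consequences). -/
def PreSVD (ℓC : C → EReal) (ℓD : D → EReal) (A : C →ₗ[Λ] D)
    {r n m : ℕ} (hrn : r ≤ n) (hrm : r ≤ m)
    (y : Module.Basis (Fin n) Λ C) (x : Module.Basis (Fin m) Λ D) : Prop :=
  IsOrthFamily Λ ℓC ⇑y ∧
  IsOrthFamily Λ ℓD ⇑x ∧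
  (∀ i : Fin r, A (y (Fin.castLE hrn i)) = x (Fin.castLE hrm i)) ∧
  (∀ i : Fin n, r ≤ (i : ℕ) → A (y i) = 0) ∧
  (∀ i j : Fin r, i ≤ j →
    ℓC (y (Fin.castLE hrn i)) - ℓD (x (Fin.castLE hrm i)) ≤
      ℓC (y (Fin.castLE hrn j)) - ℓD (x (Fin.castLE hrm j)))

lemma ker_eq_of_basis {r n m : ℕ} (hrn : r ≤ n) (hrm : r ≤ m)
    (y : Module.Basis (Fin n) Λ C) (x : Module.Basis (Fin m) Λ D) (A : C →ₗ[Λ] D)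
    (hmap : ∀ i : Fin r, A (y (Fin.castLE hrn i)) = x (Fin.castLE hrm i))
    (hker : ∀ i : Fin n, r ≤ (i : ℕ) → A (y i) = 0) :
    LinearMap.ker A = Submodule.span Λ (⇑y '' {i : Fin n | r ≤ (i : ℕ)}) := by
  classical
  apply le_antisymm
  · intro z hz
    rw [LinearMap.mem_ker] at hz
    set c : Fin n → Λ := fun i => y.repr z i with hc
    have hrepr : z = ∑ i, c i • y i := (y.sum_repr z).symm
    have hAz : ∑ i, c i • A (y i) = 0 := by
      rw [← hz]
      conv_rhs => rw [hrepr]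
      rw [map_sum]
      simp
    have hS : (Finset.univ.filter (fun i : Fin n => (i : ℕ) < r)) =
        Finset.univ.image (Fin.castLE hrn) := by
      ext i
      simp only [Finset.mem_filter, Finset.mem_univ, true_and, Finset.mem_image]
      constructor
      · intro h; exact ⟨⟨(i : ℕ), h⟩, by ext; simp⟩
      · rintro ⟨k, rfl⟩; simpa using k.isLt
    have hsum2 : ∑ k : Fin r, c (Fin.castLE hrn k) • x (Fin.castLE hrm k) = 0 := by
      have e1 : ∑ i, c i • A (y i) =
          ∑ i ∈ Finset.univ.filter (fun i : Fin n => (i : ℕ) < r), c i • A (y i) := by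
        refine (Finset.sum_subset (Finset.filter_subset _ _) ?_).symm
        intro i _ hi
        simp only [Finset.mem_filter, Finset.mem_univ, true_and, not_lt] at hi
        rw [hker i hi, smul_zero]
      have e2 : ∑ i ∈ Finset.univ.filter (fun i : Fin n => (i : ℕ) < r), c i • A (y i) =
          ∑ k : Fin r, c (Fin.castLE hrn k) • A (y (Fin.castLE hrn k)) := by
        rw [hS, Finset.sum_image (fun a _ b _ h => Fin.castLE_injective hrn h)]
      rw [← hAz, e1, e2]
      exact Finset.sum_congr rfl fun k _ => by rw [hmap k]
    have hcoef : ∀ k : Fin r, c (Fin.castLE hrn k) = 0 := by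
      have hli : LinearIndependent Λ (fun k : Fin r => x (Fin.castLE hrm k)) :=
        x.linearIndependent.comp _ (Fin.castLE_injective hrm)
      exact Fintype.linearIndependent_iff.1 hli _ hsum2
    have hz2 : z = ∑ i ∈ Finset.univ.filter (fun i : Fin n => r ≤ (i : ℕ)), c i • y i := by
      rw [hrepr]
      refine (Finset.sum_subset (Finset.filter_subset _ _) ?_).symm
      intro i _ hi
      simp only [Finset.mem_filter, Finset.mem_univ, true_and, not_le] at hi
      have : c i = 0 := by
        have := hcoef ⟨(i : ℕ), hi⟩
        simpa [show Fin.castLE hrn ⟨(i : ℕ), hi⟩ = i from by ext; simp] using this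
      rw [this, zero_smul]
    rw [hz2]
    refine Submodule.sum_mem _ fun i hi => Submodule.smul_mem _ _ (Submodule.subset_span ?_)
    simp only [Finset.mem_filter, Finset.mem_univ, true_and] at hi
    exact ⟨i, hi, rfl⟩
  · rw [Submodule.span_le]
    rintro _ ⟨i, hi, rfl⟩
    exact LinearMap.mem_ker.2 (hker i hi)

lemma range_eq_of_basis {r n m : ℕ} (hrn : r ≤ n) (hrm : r ≤ m)
    (y : Module.Basis (Fin n) Λ C) (x : Module.Basis (Fin m) Λ D) (A : C →ₗ[Λ] D)
    (hmap : ∀ i : Fin r, A (y (Fin.castLE hrn i)) = x (Fin.castLE hrm i))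
    (hker : ∀ i : Fin n, r ≤ (i : ℕ) → A (y i) = 0) :
    LinearMap.range A = Submodule.span Λ (⇑x '' {i : Fin m | (i : ℕ) < r}) := by
  apply le_antisymm
  · rw [LinearMap.range_eq_map, ← y.span_eq, Submodule.map_span, Submodule.span_le]
    rintro _ ⟨_, ⟨i, rfl⟩, rfl⟩
    by_cases h : (i : ℕ) < r
    · have : i = Fin.castLE hrn ⟨(i : ℕ), h⟩ := by ext; simp
      rw [this, hmap]
      exact Submodule.subset_span ⟨_, by simpa using h, rfl⟩
    · rw [hker i (not_lt.1 h)]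
      exact Submodule.zero_mem _
  · rw [Submodule.span_le]
    rintro _ ⟨i, hi, rfl⟩
    have : i = Fin.castLE hrm ⟨(i : ℕ), hi⟩ := by ext; simp
    rw [this, ← hmap]
    exact LinearMap.mem_range_self _ _

/-- The order-reversing-on-`[0,r)` permutation of `Fin n`. -/
def revPerm (r n : ℕ) (hrn : r ≤ n) : Equiv.Perm (Fin n) :=
  Function.Involutive.toPerm
    (fun i => if h : (i : ℕ) < r then ⟨r - 1 - (i : ℕ), by omega⟩ else i)
    (by
      intro i
      by_cases h : (i : ℕ) < r
      · have h2 : r - 1 - (i : ℕ) < r := by omega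
        simp only [h, dif_pos, h2]
        ext; simp; omega
      · simp only [h, dif_neg]
        simp [h])

lemma revPerm_castLE {r n : ℕ} (hrn : r ≤ n) (i : Fin r) :
    revPerm r n hrn (Fin.castLE hrn i) = Fin.castLE hrn i.rev := by
  have h : ((Fin.castLE hrn i : Fin n) : ℕ) < r := i.isLt
  simp only [revPerm, Function.Involutive.toPerm, Equiv.coe_fn_mk]
  rw [dif_pos h]
  ext
  simp [Fin.rev]
  omega

lemma revPerm_of_le {r n : ℕ} (hrn : r ≤ n) (i : Fin n) (h : r ≤ (i : ℕ)) :
    revPerm r n hrn i = i := by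
  simp only [revPerm, Function.Involutive.toPerm, Equiv.coe_fn_mk]
  rw [dif_neg (not_lt.2 h)]

end Wrapper
section Wrapper2

variable {Λ : Type*} [Field Λ] {C D : Type*} [AddCommGroup C] [Module Λ C]
  [AddCommGroup D] [Module Λ D]

lemma presvd_isvd {ℓC : C → EReal} {ℓD : D → EReal} (A : C →ₗ[Λ] D) {r n m : ℕ}
    (hrn : r ≤ n) (hrm : r ≤ m) (y : Module.Basis (Fin n) Λ C) (x : Module.Basis (Fin m) Λ D)
    (h : PreSVD ℓC ℓD A hrn hrm y x) :
    ∃ (y' : Module.Basis (Fin n) Λ C) (x' : Module.Basis (Fin m) Λ D), IsSVD ℓC ℓD A hrn hrm y' x' := by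
  obtain ⟨hy, hx, hmap, hker, hsort⟩ := h
  set σn := revPerm r n hrn with hσn
  set σm := revPerm r m hrm with hσm
  refine ⟨y.reindex σn.symm, x.reindex σm.symm, ?_⟩
  have hy' : ⇑(y.reindex σn.symm) = ⇑y ∘ ⇑σn := by
    rw [Module.Basis.coe_reindex, Equiv.symm_symm]
  have hx' : ⇑(x.reindex σm.symm) = ⇑x ∘ ⇑σm := by
    rw [Module.Basis.coe_reindex, Equiv.symm_symm]
  have hmap' : ∀ i : Fin r,
      A ((y.reindex σn.symm) (Fin.castLE hrn i)) = (x.reindex σm.symm) (Fin.castLE hrm i) := by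
    intro i
    rw [show ((y.reindex σn.symm) (Fin.castLE hrn i) : C) = (⇑y ∘ ⇑σn) (Fin.castLE hrn i) from
      congrFun hy' _, show ((x.reindex σm.symm) (Fin.castLE hrm i) : D) =
      (⇑x ∘ ⇑σm) (Fin.castLE hrm i) from congrFun hx' _]
    simp only [Function.comp_apply, hσn, hσm, revPerm_castLE]
    exact hmap i.rev
  have hker' : ∀ i : Fin n, r ≤ (i : ℕ) → A ((y.reindex σn.symm) i) = 0 := by
    intro i hi
    rw [show ((y.reindex σn.symm) i : C) = (⇑y ∘ ⇑σn) i from congrFun hy' _]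
    simp only [Function.comp_apply, hσn, revPerm_of_le hrn i hi]
    exact hker i hi
  refine ⟨?_, ?_, hmap', hker', ?_, ?_, ?_⟩
  · rw [hy']; exact orth_reindex hy σn
  · rw [hx']; exact orth_reindex hx σm
  · exact ker_eq_of_basis hrn hrm _ _ A hmap' hker'
  · exact range_eq_of_basis hrn hrm _ _ A hmap' hker'
  · intro i j hij
    rw [show ((y.reindex σn.symm) (Fin.castLE hrn i) : C) = (⇑y ∘ ⇑σn) _ from congrFun hy' _,
      show ((y.reindex σn.symm) (Fin.castLE hrn j) : C) = (⇑y ∘ ⇑σn) _ from congrFun hy' _,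
      show ((x.reindex σm.symm) (Fin.castLE hrm i) : D) = (⇑x ∘ ⇑σm) _ from congrFun hx' _,
      show ((x.reindex σm.symm) (Fin.castLE hrm j) : D) = (⇑x ∘ ⇑σm) _ from congrFun hx' _]
    simp only [Function.comp_apply, hσn, hσm, revPerm_castLE]
    exact hsort j.rev i.rev (Fin.rev_le_rev.2 hij)

end Wrapper2
section Helpers

open EReal Submodule Set

variable {Γ : AddSubgroup ℝ} {Λ : Type*} [Field Λ] {NS : NovikovStructure Γ Λ}
variable {C : Type*} [AddCommGroup C] [Module Λ C] {ℓ : C → EReal}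

lemma ereal_exists_real {e : EReal} (h1 : e ≠ ⊥) (h2 : e ≠ ⊤) : ∃ r : ℝ, e = (r : EReal) :=
  ⟨e.toReal, (EReal.coe_toReal h2 h1).symm⟩

lemma l_real (hl : IsNonArchNorm NS ℓ) {z : C} (hz : z ≠ 0) : ∃ r : ℝ, ℓ z = (r : EReal) :=
  ereal_exists_real (fun h => hz ((hl.eq_bot_iff z).1 h)) (hl.ne_top z)

lemma ereal_le_cancel {a b : EReal} (c : ℝ) (h : a - (c : EReal) ≤ b - (c : EReal)) :
    a ≤ b := by
  have h2 := add_le_add h (le_refl (c : EReal))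
  rwa [EReal.sub_add_cancel, EReal.sub_add_cancel] at h2

lemma ereal_add_sub_le (c a : ℝ) (b : EReal) :
    ((c : EReal) + (a : EReal)) - b ≤ (c : EReal) + ((a : EReal) - b) := by
  induction b with
  | bot =>
    rw [show ((c : EReal) + (a : EReal)) = ((c + a : ℝ) : EReal) by norm_cast,
      EReal.coe_sub_bot, sub_eq_add_neg, EReal.neg_bot, EReal.coe_add_top]
    exact le_top
  | coe b => norm_cast; linarith
  | top =>
    rw [sub_eq_add_neg, sub_eq_add_neg, EReal.neg_top, EReal.add_bot, EReal.add_bot,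
      EReal.add_bot]

lemma restrict_norm (hl : IsNonArchNorm NS ℓ) (W : Submodule Λ C) :
    IsNonArchNorm NS (fun z : W => ℓ (z : C)) := by
  constructor
  · intro x
    rw [hl.eq_bot_iff]
    exact_mod_cast Iff.rfl
  · intro x; exact hl.ne_top _
  · intro a x; exact hl.smul_eq a (x : C)
  · intro x y; exact hl.add_le (x : C) (y : C)

lemma orth_span_basis {k : ℕ} {f : Fin k → C} (hli : LinearIndependent Λ f)
    (hf : IsOrthFamily Λ ℓ f) :
    IsOrthFamily Λ (fun z : Submodule.span Λ (Set.range f) => ℓ (z : C)) ⇑(Module.Basis.span hli) := by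
  intro a
  have h1 : ((∑ i, a i • Module.Basis.span hli i : Submodule.span Λ (Set.range f)) : C) =
      ∑ i, a i • f i := by
    push_cast
    exact Finset.sum_congr rfl fun i _ => by rw [Module.Basis.span_apply]
  have h2 : ∀ i, ((a i • Module.Basis.span hli i : Submodule.span Λ (Set.range f)) : C) =
      a i • f i := by
    intro i
    push_cast
    rw [Module.Basis.span_apply]
  show ℓ _ = ⨆ i, ℓ _
  rw [h1, hf a]
  exact iSup_congr fun i => by rw [h2 i]

lemma mem_span_tail {m : ℕ} {D : Type*} [AddCommGroup D] [Module Λ D]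
    (w : Module.Basis (Fin (m + 1)) Λ D) {z : D} (h : w.repr z 0 = 0) :
    z ∈ Submodule.span Λ (Set.range (⇑w ∘ Fin.succ)) := by
  have hz : z = ∑ k : Fin m, w.repr z k.succ • w k.succ := by
    conv_lhs => rw [← w.sum_repr z]
    rw [Fin.sum_univ_succ, h, zero_smul, zero_add]
  rw [hz]
  exact Submodule.sum_mem _ fun k _ =>
    Submodule.smul_mem _ _ (Submodule.subset_span ⟨k, rfl⟩)

lemma castLE_succ {r n : ℕ} (h : r + 1 ≤ n + 1) (k : Fin r) :
    Fin.castLE h k.succ = (Fin.castLE (Nat.succ_le_succ_iff.1 h) k).succ := by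
  ext; simp

/-- Splicing an orthogonal vector onto an orthogonal family of a submodule. -/
lemma orth_cons {k : ℕ} {u : C} {W : Submodule Λ C}
    (hsplit : ∀ (α : Λ) (z : C), z ∈ W → ℓ (α • u + z) = max (ℓ (α • u)) (ℓ z))
    {g : Fin k → W} (hg : IsOrthFamily Λ (fun z : W => ℓ (z : C)) g) :
    IsOrthFamily Λ ℓ (Fin.cons u (fun i => ((g i : C)))) := by
  intro a
  set G : Fin (k + 1) → C := Fin.cons u (fun i => ((g i : C))) with hG
  have hsum : ∑ i, a i • G i = a 0 • u + ((∑ i, a i.succ • g i : W) : C) := by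
    rw [Fin.sum_univ_succ (f := fun i => a i • G i)]
    simp [hG]
  have hz : ((∑ i, a i.succ • g i : W) : C) ∈ W := Submodule.coe_mem _
  have hℓz : ℓ ((∑ i, a i.succ • g i : W) : C) = ⨆ i : Fin k, ℓ (a i.succ • (g i : C)) := by
    have := hg (fun i => a i.succ)
    simp only at this
    rw [this]
    exact iSup_congr fun i => by push_cast; rfl
  show ℓ (∑ i, a i • G i) = ⨆ i, ℓ (a i • G i)
  rw [hsum, hsplit (a 0) _ hz, hℓz, isup_fin_succ (f := fun i => ℓ (a i • G i))]
  simp [hG]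

end Helpers

section MoreHelpers
variable {Γ : AddSubgroup ℝ} {Λ : Type*} [Field Λ] {NS : NovikovStructure Γ Λ}
variable {C : Type*} [AddCommGroup C] [Module Λ C] {ℓ : C → EReal}

lemma orth_li {ι : Type*} [Fintype ι] (hl : IsNonArchNorm NS ℓ) {f : ι → C}
    (hf : IsOrthFamily Λ ℓ f) (hnz : ∀ i, f i ≠ 0) : LinearIndependent Λ f := by
  rw [Fintype.linearIndependent_iff]
  intro a ha i
  have h := hf a
  rw [ha, l_zero hl] at h
  have h2 : ℓ (a i • f i) ≤ (⊥ : EReal) := h ▸ le_iSup (fun i => ℓ (a i • f i)) i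
  have h3 : a i • f i = 0 := (hl.eq_bot_iff _).1 (le_bot_iff.1 h2)
  rcases smul_eq_zero.1 h3 with h4 | h4
  · exact h4
  · exact absurd h4 (hnz i)

end MoreHelpers
section Step

open EReal Submodule Set

universe uC uD uL

lemma svd_step {Γ : AddSubgroup ℝ} {Λ : Type uL} [Field Λ] (NS : NovikovStructure Γ Λ)
    {C : Type uC} {D : Type uD} [AddCommGroup C] [Module Λ C] [AddCommGroup D] [Module Λ D]
    {ℓC : C → EReal} {ℓD : D → EReal}
    (hlC : IsNonArchNorm NS ℓC) (hlD : IsNonArchNorm NS ℓD)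
    {n m : ℕ} (v : Module.Basis (Fin (n + 1)) Λ C) (hv : IsOrthFamily Λ ℓC ⇑v)
    (w : Module.Basis (Fin (m + 1)) Λ D) (hw : IsOrthFamily Λ ℓD ⇑w)
    (A : C →ₗ[Λ] D)
    (hM00 : w.repr (A (v 0)) 0 ≠ 0)
    (hmax : ∀ (i : Fin (m + 1)) (j : Fin (n + 1)),
      ℓD (w i) - NS.ν (w.repr (A (v j)) i) - ℓC (v j) ≤
        ℓD (w 0) - NS.ν (w.repr (A (v 0)) 0) - ℓC (v 0))
    (IH : ∀ {C' : Type uC} {D' : Type uD} [AddCommGroup C'] [Module Λ C']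
      [AddCommGroup D'] [Module Λ D'] (ℓC' : C' → EReal) (ℓD' : D' → EReal),
      IsNonArchNorm NS ℓC' → IsNonArchNorm NS ℓD' →
      ∀ (v' : Module.Basis (Fin n) Λ C'), IsOrthFamily Λ ℓC' ⇑v' →
      ∀ (w' : Module.Basis (Fin m) Λ D'), IsOrthFamily Λ ℓD' ⇑w' →
      ∀ (A' : C' →ₗ[Λ] D'), ∃ (r : ℕ) (hrn : r ≤ n) (hrm : r ≤ m)
        (y : Module.Basis (Fin n) Λ C') (x : Module.Basis (Fin m) Λ D'), PreSVD ℓC' ℓD' A' hrn hrm y x) :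
    ∃ (r : ℕ) (hrn : r ≤ n + 1) (hrm : r ≤ m + 1)
      (y : Module.Basis (Fin (n + 1)) Λ C) (x : Module.Basis (Fin (m + 1)) Λ D),
      PreSVD ℓC ℓD A hrn hrm y x := by
  classical
  set M : Fin (m + 1) → Fin (n + 1) → Λ := fun i j => w.repr (A (v j)) i with hM
  obtain ⟨r0, hr0⟩ := l_real hlC (v.ne_zero 0)
  obtain ⟨s0, hs0⟩ := l_real hlD (w.ne_zero 0)
  obtain ⟨g0, hg0⟩ := nu_exists_real (NS := NS) hM00
  -- the coefficients of the column operations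
  set c : Fin (n + 1) → Λ := fun j => if j = 0 then 0 else -(M 0 j / M 0 0) with hc
  have hc0 : c 0 = 0 := by simp [hc]
  have hcle : ∀ j, ℓC (c j • v 0) ≤ ℓC (v j) := by
    intro j
    by_cases hj : j = 0
    · subst hj; rw [hc0, zero_smul, l_zero hlC]; exact bot_le
    · by_cases hMj : M 0 j = 0
      · simp [hc, hj, hMj, l_zero hlC]
      · obtain ⟨gj, hgj⟩ := nu_exists_real (NS := NS) hMj
        obtain ⟨rj, hrj⟩ := l_real hlC (v.ne_zero j)
        have hνc : NS.ν (c j) = ((gj - g0 : ℝ) : EReal) := by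
          have h1 : c j = -(M 0 j * (M 0 0)⁻¹) := by simp [hc, hj, div_eq_mul_inv]
          rw [h1, nu_neg, NS.ν_mul, nu_inv hM00, hgj, hg0]
          norm_cast
        have hx := hmax 0 j
        rw [hs0, hgj, hrj, hg0, hr0] at hx
        have hx' : s0 - gj - rj ≤ s0 - g0 - r0 := by exact_mod_cast hx
        rw [hlC.smul_eq, hr0, hνc, hrj]
        exact_mod_cast (by linarith : r0 - (gj - g0) ≤ rj)
  -- the new orthogonal family in C
  set y' : Fin (n + 1) → C := fun j => v j + c j • v 0 with hy'
  have hy'0 : y' 0 = v 0 := by rw [hy']; simp [hc0]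
  have hy'orth : IsOrthFamily Λ ℓC y' := orth_colop hlC hv c hc0 hcle
  have hy'val : ∀ j, ℓC (y' j) = ℓC (v j) := by
    intro j
    by_cases hj : j = 0
    · subst hj; rw [hy'0]
    · have hp := orth_pair hlC hv (hj : j ≠ 0) 1 (c j)
      rw [one_smul] at hp
      rw [hy']
      simp only
      rw [hp]
      exact max_eq_left (hcle j)
  have hy'nz : ∀ j, y' j ≠ 0 := by
    intro j h
    have := hy'val j
    rw [h, l_zero hlC] at this
    exact (hlC.eq_bot_iff (v j)).not.2 (fun hh => v.ne_zero j hh) this.symm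
  have hy'li : LinearIndependent Λ y' := orth_li hlC hy'orth hy'nz
  -- the modified D-family
  set d : Fin (m + 1) → Λ := fun i => M i 0 with hd
  set u : D := A (v 0) with hu
  have hud : u = ∑ i, d i • w i := (w.sum_repr (A (v 0))).symm
  have hdle : ∀ i, ℓD (d i • w i) ≤ ℓD (d 0 • w 0) := by
    intro i
    by_cases hMi : M i 0 = 0
    · simp [hd, hMi, l_zero hlD]
    · have hx := hmax i 0
      rw [hr0] at hx
      have h2 := ereal_le_cancel r0 hx
      rw [hlD.smul_eq, hlD.smul_eq]
      exact h2
  have hWorth : IsOrthFamily Λ ℓD (Fin.cons u (⇑w ∘ Fin.succ)) := by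
    rw [show u = ∑ i, d i • w i from hud]
    exact orth_pivot hlD hw d hdle
  -- the submodules
  set C' : Submodule Λ C := Submodule.span Λ (Set.range (y' ∘ Fin.succ)) with hC'
  set D' : Submodule Λ D := Submodule.span Λ (Set.range (⇑w ∘ Fin.succ)) with hD'
  have liC' : LinearIndependent Λ (y' ∘ Fin.succ) :=
    orth_li hlC (orth_tail hlC hy'orth) (fun k => hy'nz _)
  have liD' : LinearIndependent Λ (⇑w ∘ Fin.succ) :=
    w.linearIndependent.comp Fin.succ (Fin.succ_injective m)
  set bC' : Module.Basis (Fin n) Λ C' := Module.Basis.span liC' with hbC'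
  set bD' : Module.Basis (Fin m) Λ D' := Module.Basis.span liD' with hbD'
  have orthC' : IsOrthFamily Λ (fun z : C' => ℓC (z : C)) ⇑bC' :=
    orth_span_basis liC' (orth_tail hlC hy'orth)
  have orthD' : IsOrthFamily Λ (fun z : D' => ℓD (z : D)) ⇑bD' :=
    orth_span_basis liD' (orth_tail hlD hw)
  -- membership facts
  have hreprD' : ∀ z ∈ D', w.repr z 0 = 0 := by
    intro z hz
    have hle : D' ≤ LinearMap.ker (w.coord 0) := by
      rw [hD', Submodule.span_le]
      rintro _ ⟨k, rfl⟩
      simp only [SetLike.mem_coe, LinearMap.mem_ker, Function.comp_apply, Module.Basis.coord_apply,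
        Module.Basis.repr_self]
      rw [Finsupp.single_apply]
      simp [(Fin.succ_ne_zero k)]
    have := hle hz
    rwa [LinearMap.mem_ker, Module.Basis.coord_apply] at this
  have hAtail : ∀ k : Fin n, A (y' k.succ) ∈ D' := by
    intro k
    apply mem_span_tail w
    have h1 : A (y' k.succ) = A (v k.succ) + c k.succ • A (v 0) := by
      rw [hy']; simp [smul_smul]
    rw [h1, map_add, map_smul]
    show M 0 k.succ + c k.succ * M 0 0 = 0
    have : c k.succ = -(M 0 k.succ / M 0 0) := by simp [hc, Fin.succ_ne_zero k]
    rw [this]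
    rw [neg_mul, div_mul_cancel₀ _ (show M 0 0 ≠ 0 from hM00)]; ring
  have hAC' : ∀ z ∈ C', A z ∈ D' := by
    intro z hz
    have hle : C' ≤ Submodule.comap A D' := by
      rw [hC', Submodule.span_le]
      rintro _ ⟨k, rfl⟩
      exact hAtail k
    exact hle hz
  set A' : C' →ₗ[Λ] D' := A.restrict hAC' with hA'
  -- apply the induction hypothesis
  obtain ⟨r', hr'n, hr'm, y'', x'', py, px, pmap, pker, psort⟩ :=
    IH (fun z : C' => ℓC (z : C)) (fun z : D' => ℓD (z : D))
      (restrict_norm hlC C') (restrict_norm hlD D') bC' orthC' bD' orthD' A'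
  -- linear independence facts for the cons constructions
  have hv0notC' : v 0 ∉ C' := by
    have hfull : LinearIndependent Λ (Fin.cons (y' 0) (y' ∘ Fin.succ)) := by
      have heq : Fin.cons (y' 0) (y' ∘ Fin.succ) = y' := funext fun j => by
        induction j using Fin.cases <;> simp
      rwa [heq]
    have h2 := (linearIndependent_fin_cons.1 hfull).2
    rwa [hy'0] at h2
  have hunotD' : u ∉ D' := by
    intro h
    exact hM00 (hreprD' u h)
  have hliY : ∀ e : Λ, ∀ z ∈ C', e • v 0 + z = 0 → e = 0 := by
    intro e z hz he
    by_contra hne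
    apply hv0notC'
    have : v 0 = e⁻¹ • (-z) := by
      have h1 : e • v 0 = -z := by
        rw [eq_neg_iff_add_eq_zero]; exact he
      rw [← h1, smul_smul, inv_mul_cancel₀ hne, one_smul]
    rw [this]
    exact Submodule.smul_mem _ _ (Submodule.neg_mem _ hz)
  have hliX : ∀ e : Λ, ∀ z ∈ D', e • u + z = 0 → e = 0 := by
    intro e z hz he
    by_contra hne
    apply hunotD'
    have : u = e⁻¹ • (-z) := by
      have h1 : e • u = -z := by
        rw [eq_neg_iff_add_eq_zero]; exact he
      rw [← h1, smul_smul, inv_mul_cancel₀ hne, one_smul]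
    rw [this]
    exact Submodule.smul_mem _ _ (Submodule.neg_mem _ hz)
  have hspY : ∀ z : C, ∃ e : Λ, z + e • v 0 ∈ C' := by
    intro z
    set a : Fin (n + 1) → Λ := fun j => v.repr z j with ha
    refine ⟨(∑ k : Fin n, a k.succ * c k.succ) - a 0, ?_⟩
    have hrepr : z = a 0 • v 0 + ∑ k : Fin n, a k.succ • v k.succ := by
      conv_lhs => rw [← v.sum_repr z]
      rw [Fin.sum_univ_succ]
    have hkey : z + ((∑ k : Fin n, a k.succ * c k.succ) - a 0) • v 0 =
        ∑ k : Fin n, a k.succ • y' k.succ := by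
      rw [hy']
      simp only [smul_add, Finset.sum_add_distrib, smul_smul]
      rw [← Finset.sum_smul]
      rw [hrepr]
      rw [sub_smul]
      abel
    rw [hkey]
    exact Submodule.sum_mem _ fun k _ =>
      Submodule.smul_mem _ _ (Submodule.subset_span ⟨k, rfl⟩)
  have hspX : ∀ z : D, ∃ e : Λ, z + e • u ∈ D' := by
    intro z
    refine ⟨-(w.repr z 0 / M 0 0), ?_⟩
    apply mem_span_tail w
    rw [map_add, map_smul]
    show w.repr z 0 + -(w.repr z 0 / M 0 0) * M 0 0 = 0
    rw [neg_mul, div_mul_cancel₀ _ (show M 0 0 ≠ 0 from hM00)]; ring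
  set Y : Module.Basis (Fin (n + 1)) Λ C := Module.Basis.mkFinCons (v 0) y'' hliY hspY with hY
  set X : Module.Basis (Fin (m + 1)) Λ D := Module.Basis.mkFinCons u x'' hliX hspX with hX
  have coeY : ⇑Y = Fin.cons (v 0) (fun k => ((y'' k : C))) := by
    rw [hY, Module.Basis.coe_mkFinCons]; rfl
  have coeX : ⇑X = Fin.cons u (fun k => ((x'' k : D))) := by
    rw [hX, Module.Basis.coe_mkFinCons]; rfl
  -- splitting hypotheses
  have hsplitC : ∀ (α : Λ) (z : C), z ∈ C' → ℓC (α • v 0 + z) = max (ℓC (α • v 0)) (ℓC z) := by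
    intro α z hz
    set zz : C' := ⟨z, hz⟩ with hzz
    set b : Fin n → Λ := fun k => bC'.repr zz k with hb
    have hzb : ((zz : C')  : C) = ∑ k : Fin n, b k • y' k.succ := by
      conv_lhs => rw [← bC'.sum_repr zz]
      push_cast
      exact Finset.sum_congr rfl fun k _ => by rw [hbC', Module.Basis.span_apply]; rfl
    have h3 := orth_split hy'orth α b
    rw [hy'0, ← hzb] at h3
    have h4 : ℓC z = ⨆ k : Fin n, ℓC (b k • y' k.succ) := by
      rw [show z = ((zz : C') : C) from rfl, hzb]
      exact orth_tail hlC hy'orth b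
    rw [h3, ← h4]
  have hsplitD : ∀ (α : Λ) (z : D), z ∈ D' → ℓD (α • u + z) = max (ℓD (α • u)) (ℓD z) := by
    intro α z hz
    set zz : D' := ⟨z, hz⟩ with hzz
    set b : Fin m → Λ := fun k => bD'.repr zz k with hb
    have hzb : ((zz : D') : D) = ∑ k : Fin m, b k • w k.succ := by
      conv_lhs => rw [← bD'.sum_repr zz]
      push_cast
      exact Finset.sum_congr rfl fun k _ => by rw [hbD', Module.Basis.span_apply]; rfl
    have h3 := orth_split hWorth α b
    simp only [Fin.cons_zero, Fin.cons_succ, Function.comp_apply] at h3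
    rw [← hzb] at h3
    have h4 : ℓD z = ⨆ k : Fin m, ℓD (b k • w k.succ) := by
      rw [show z = ((zz : D') : D) from rfl, hzb]
      have h5 := orth_tail hlD hWorth b
      simpa using h5
    rw [h3, ← h4]
  have orthY : IsOrthFamily Λ ℓC ⇑Y := by
    rw [coeY]
    exact orth_cons hsplitC py
  have orthX : IsOrthFamily Λ ℓD ⇑X := by
    rw [coeX]
    exact orth_cons hsplitD px
  -- the PreSVD conditions
  have hrn : r' + 1 ≤ n + 1 := Nat.succ_le_succ hr'n
  have hrm : r' + 1 ≤ m + 1 := Nat.succ_le_succ hr'm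
  refine ⟨r' + 1, hrn, hrm, Y, X, orthY, orthX, ?_, ?_, ?_⟩
  · -- maps
    intro i
    induction i using Fin.cases with
    | zero =>
      have h1 : Y (Fin.castLE hrn 0) = v 0 := by
        rw [show Fin.castLE hrn (0 : Fin (r' + 1)) = 0 from rfl, coeY]; simp
      have h2 : X (Fin.castLE hrm 0) = u := by
        rw [show Fin.castLE hrm (0 : Fin (r' + 1)) = 0 from rfl, coeX]; simp
      rw [h1, h2, hu]
    | succ k =>
      have h1 : Y (Fin.castLE hrn k.succ) = ((y'' (Fin.castLE hr'n k) : C)) := by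
        rw [castLE_succ hrn k, coeY]; simp
      have h2 : X (Fin.castLE hrm k.succ) = ((x'' (Fin.castLE hr'm k) : D)) := by
        rw [castLE_succ hrm k, coeX]; simp
      rw [h1, h2]
      have h3 : A ((y'' (Fin.castLE hr'n k) : C)) = ((A' (y'' (Fin.castLE hr'n k)) : D)) :=
        (LinearMap.restrict_coe_apply A hAC' _).symm
      rw [h3, pmap k]
  · -- zeros
    intro i hi
    induction i using Fin.cases with
    | zero => simp at hi
    | succ k =>
      have hk : r' ≤ (k : ℕ) := by
        simpa [Fin.val_succ] using hi
      have h1 : Y k.succ = ((y'' k : C)) := by rw [coeY]; simp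
      rw [h1]
      have h2 : A ((y'' k : C)) = ((A' (y'' k) : D)) :=
        (LinearMap.restrict_coe_apply A hAC' (y'' k)).symm
      rw [h2, pker k hk]
      rfl
  · -- sorted
    have hAv : ∀ j, ℓD (A (v j)) ≤ ((s0 - g0 - r0 : ℝ) : EReal) + ℓC (v j) := by
      intro j
      have hAvj : A (v j) = ∑ i, w.repr (A (v j)) i • w i := (w.sum_repr _).symm
      rw [hAvj, hw (fun i => w.repr (A (v j)) i)]
      refine iSup_le fun i => ?_
      by_cases hMij : w.repr (A (v j)) i = 0
      · rw [hMij, zero_smul, l_zero hlD]; exact bot_le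
      · obtain ⟨gij, hgij⟩ := nu_exists_real (NS := NS) hMij
        obtain ⟨rj, hrj⟩ := l_real hlC (v.ne_zero j)
        obtain ⟨si, hsi⟩ := l_real hlD (w.ne_zero i)
        have h := hmax i j
        rw [show NS.ν (w.repr (A (v j)) i) = ((gij : ℝ) : EReal) from hgij, hg0, hs0, hsi,
          hrj, hr0] at h
        have h' : si - gij - rj ≤ s0 - g0 - r0 := by exact_mod_cast h
        rw [hlD.smul_eq, hsi, hrj,
          show NS.ν (w.repr (A (v j)) i) = ((gij : ℝ) : EReal) from hgij]
        exact_mod_cast (by linarith : si - gij ≤ (s0 - g0 - r0) + rj)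
    have claimK : ∀ z : C, ℓD (A z) ≤ ((s0 - g0 - r0 : ℝ) : EReal) + ℓC z := by
      intro z
      have hz1 : A z = ∑ j, v.repr z j • A (v j) := by
        conv_lhs => rw [← v.sum_repr z]
        rw [map_sum]
        simp
      have hz2 : ℓC z = ⨆ j, ℓC (v.repr z j • v j) := by
        conv_lhs => rw [← v.sum_repr z]
        exact hv _
      rw [hz1]
      refine (l_sum_le' hlD _).trans (iSup_le fun j => ?_)
      obtain ⟨rj, hrj⟩ := l_real hlC (v.ne_zero j)
      calc ℓD (v.repr z j • A (v j))
          ≤ (((s0 - g0 - r0 : ℝ) : EReal) + ℓC (v j)) - NS.ν (v.repr z j) := by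
            rw [hlD.smul_eq]; exact EReal.sub_le_sub (hAv j) le_rfl
        _ ≤ ((s0 - g0 - r0 : ℝ) : EReal) + (ℓC (v j) - NS.ν (v.repr z j)) := by
            rw [hrj]; exact ereal_add_sub_le _ _ _
        _ = ((s0 - g0 - r0 : ℝ) : EReal) + ℓC (v.repr z j • v j) := by
            rw [hlC.smul_eq]
        _ ≤ ((s0 - g0 - r0 : ℝ) : EReal) + ℓC z := by
            rw [hz2]
            exact add_le_add le_rfl (le_iSup (fun j => ℓC (v.repr z j • v j)) j)
    have hlDu : ℓD u = ((s0 - g0 : ℝ) : EReal) := by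
      have h1 : u = ∑ i, w.repr u i • w i := (w.sum_repr u).symm
      conv_lhs => rw [h1]
      rw [hw (fun i => w.repr u i)]
      apply le_antisymm
      · refine iSup_le fun i => ?_
        by_cases hMi : w.repr u i = 0
        · rw [hMi, zero_smul, l_zero hlD]; exact bot_le
        · obtain ⟨gi, hgi⟩ := nu_exists_real (NS := NS) hMi
          obtain ⟨si, hsi⟩ := l_real hlD (w.ne_zero i)
          have h := hmax i 0
          rw [show NS.ν (w.repr (A (v 0)) i) = ((gi : ℝ) : EReal) from hgi, hg0, hs0, hsi,
            hr0] at h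
          have h' : si - gi - r0 ≤ s0 - g0 - r0 := by exact_mod_cast h
          rw [hlD.smul_eq, hsi, hgi]
          exact_mod_cast (by linarith : si - gi ≤ s0 - g0)
      · have h0 : ℓD (w.repr u 0 • w 0) = ((s0 - g0 : ℝ) : EReal) := by
          rw [hlD.smul_eq, hs0, hg0]; norm_cast
        rw [← h0]
        exact le_iSup (fun i => ℓD (w.repr u i • w i)) 0
    have hY0 : Y (Fin.castLE hrn 0) = v 0 := by
      rw [show Fin.castLE hrn (0 : Fin (r' + 1)) = 0 from rfl, coeY]; simp
    have hX0 : X (Fin.castLE hrm 0) = u := by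
      rw [show Fin.castLE hrm (0 : Fin (r' + 1)) = 0 from rfl, coeX]; simp
    have hYs : ∀ k : Fin r', Y (Fin.castLE hrn k.succ) = ((y'' (Fin.castLE hr'n k) : C)) := by
      intro k; rw [castLE_succ hrn k, coeY]; simp
    have hXs : ∀ k : Fin r', X (Fin.castLE hrm k.succ) = ((x'' (Fin.castLE hr'm k) : D)) := by
      intro k; rw [castLE_succ hrm k, coeX]; simp
    have hkey : ∀ b : Fin r', ℓC (v 0) - ℓD u ≤
        ℓC ((y'' (Fin.castLE hr'n b) : C)) - ℓD ((x'' (Fin.castLE hr'm b) : D)) := by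
      intro b
      have hynz : ((y'' (Fin.castLE hr'n b) : C)) ≠ 0 := by
        intro h
        exact y''.ne_zero _ (Submodule.coe_eq_zero.1 h)
      obtain ⟨rz, hrz⟩ := l_real hlC hynz
      have hxnz : ((x'' (Fin.castLE hr'm b) : D)) ≠ 0 := by
        intro h
        exact x''.ne_zero _ (Submodule.coe_eq_zero.1 h)
      obtain ⟨sz, hsz⟩ := l_real hlD hxnz
      have hAy : A ((y'' (Fin.castLE hr'n b) : C)) = ((x'' (Fin.castLE hr'm b) : D)) := by
        have h3 : A ((y'' (Fin.castLE hr'n b) : C)) = ((A' (y'' (Fin.castLE hr'n b)) : D)) :=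
          (LinearMap.restrict_coe_apply A hAC' _).symm
        rw [h3, pmap b]
      have hk := claimK ((y'' (Fin.castLE hr'n b) : C))
      rw [hAy, hsz, hrz] at hk
      have hk' : sz ≤ (s0 - g0 - r0) + rz := by exact_mod_cast hk
      rw [hr0, hlDu, hrz, hsz]
      exact_mod_cast (by linarith : r0 - (s0 - g0) ≤ rz - sz)
    intro i j hij
    rcases Fin.eq_zero_or_eq_succ j with rfl | ⟨b, rfl⟩
    · have hi0 : i = 0 := le_antisymm hij (Fin.zero_le i)
      rw [hi0]
    · rcases Fin.eq_zero_or_eq_succ i with rfl | ⟨a, rfl⟩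
      · rw [hY0, hX0, hYs b, hXs b]
        exact hkey b
      · have hab : a ≤ b := by
          rwa [Fin.succ_le_succ_iff] at hij
        rw [hYs a, hXs a, hYs b, hXs b]
        exact psort a b hab

end Step
section Aux

open EReal

universe uC uD uL

lemma svd_aux {Γ : AddSubgroup ℝ} {Λ : Type uL} [Field Λ] (NS : NovikovStructure Γ Λ) :
    ∀ (n : ℕ) {C : Type uC} {D : Type uD} [AddCommGroup C] [Module Λ C]
      [AddCommGroup D] [Module Λ D] {ℓC : C → EReal} {ℓD : D → EReal},
      IsNonArchNorm NS ℓC → IsNonArchNorm NS ℓD →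
      ∀ {m : ℕ} (v : Module.Basis (Fin n) Λ C), IsOrthFamily Λ ℓC ⇑v →
      ∀ (w : Module.Basis (Fin m) Λ D), IsOrthFamily Λ ℓD ⇑w →
      ∀ (A : C →ₗ[Λ] D), ∃ (r : ℕ) (hrn : r ≤ n) (hrm : r ≤ m)
        (y : Module.Basis (Fin n) Λ C) (x : Module.Basis (Fin m) Λ D), PreSVD ℓC ℓD A hrn hrm y x := by
  intro n
  induction n with
  | zero =>
    intro C D _ _ _ _ ℓC ℓD hlC hlD m v hv w hw A
    refine ⟨0, Nat.zero_le _, Nat.zero_le _, v, w, hv, hw, fun i => i.elim0, ?_,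
      fun i j _ => i.elim0⟩
    intro i _
    have hz : v i = 0 := by
      have := v.sum_repr (v i)
      simpa using this.symm
    rw [hz, map_zero]
  | succ n IHn =>
    intro C D _ _ _ _ ℓC ℓD hlC hlD m v hv w hw A
    by_cases hA : A = 0
    · subst hA
      exact ⟨0, Nat.zero_le _, Nat.zero_le _, v, w, hv, hw, fun i => i.elim0,
        fun i _ => rfl, fun i j _ => i.elim0⟩
    · have hex : ∃ p : Fin m × Fin (n + 1), w.repr (A (v p.2)) p.1 ≠ 0 := by
        by_contra h
        push_neg at h
        apply hA
        apply v.ext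
        intro j
        show A (v j) = (0 : C →ₗ[Λ] D) (v j)
        rw [LinearMap.zero_apply]
        apply w.repr.map_eq_zero_iff.1
        exact Finsupp.ext fun i => h (i, j)
      obtain ⟨p, hp⟩ := hex
      have hm : m ≠ 0 := by rintro rfl; exact p.1.elim0
      obtain ⟨m', rfl⟩ : ∃ m', m = m' + 1 := ⟨m - 1, by omega⟩
      set F : Fin (m' + 1) × Fin (n + 1) → EReal := fun q =>
        ℓD (w q.1) - NS.ν (w.repr (A (v q.2)) q.1) - ℓC (v q.2) with hF
      obtain ⟨q, -, hq⟩ := Finset.exists_max_image Finset.univ F ⟨p, Finset.mem_univ p⟩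
      have hq' : ∀ a, F a ≤ F q := fun a => hq a (Finset.mem_univ a)
      have hMq : w.repr (A (v q.2)) q.1 ≠ 0 := by
        intro h0
        have hbot : F q = ⊥ := by
          rw [hF]
          simp only
          rw [h0, (NS.ν_eq_top_iff 0).2 rfl, sub_eq_add_neg (ℓD (w q.1)) ⊤, EReal.neg_top,
            EReal.add_bot, EReal.bot_sub]
        obtain ⟨sp, hsp⟩ := l_real hlD (w.ne_zero p.1)
        obtain ⟨rp, hrp⟩ := l_real hlC (v.ne_zero p.2)
        obtain ⟨gp, hgp⟩ := nu_exists_real (NS := NS) hp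
        have hFp : F p = ((sp - gp - rp : ℝ) : EReal) := by
          rw [hF]; simp only
          rw [hsp, hrp, hgp]
          norm_cast
        have := hq' p
        rw [hFp, hbot] at this
        exact (EReal.coe_ne_bot _) (le_bot_iff.1 this)
      -- permute the bases so the pivot is at (0,0)
      set σC : Equiv.Perm (Fin (n + 1)) := Equiv.swap 0 q.2 with hσC
      set σD : Equiv.Perm (Fin (m' + 1)) := Equiv.swap 0 q.1 with hσD
      set v1 : Module.Basis (Fin (n + 1)) Λ C := v.reindex σC with hv1def
      set w1 : Module.Basis (Fin (m' + 1)) Λ D := w.reindex σD with hw1def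
      have hv1coe : ⇑v1 = ⇑v ∘ ⇑σC := by
        rw [hv1def, Module.Basis.coe_reindex, hσC, Equiv.symm_swap]
      have hw1coe : ⇑w1 = ⇑w ∘ ⇑σD := by
        rw [hw1def, Module.Basis.coe_reindex, hσD, Equiv.symm_swap]
      have hv1 : IsOrthFamily Λ ℓC ⇑v1 := by rw [hv1coe]; exact orth_reindex hv σC
      have hw1 : IsOrthFamily Λ ℓD ⇑w1 := by rw [hw1coe]; exact orth_reindex hw σD
      have hv1apply : ∀ j, v1 j = v (σC j) := fun j => congrFun hv1coe j
      have hw1apply : ∀ i, w1 i = w (σD i) := fun i => congrFun hw1coe i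
      have hw1repr : ∀ (z : D) i, w1.repr z i = w.repr z (σD i) := by
        intro z i
        rw [hw1def, Module.Basis.repr_reindex_apply, hσD, Equiv.symm_swap]
      have hFexpr : ∀ (i : Fin (m' + 1)) (j : Fin (n + 1)),
          ℓD (w1 i) - NS.ν (w1.repr (A (v1 j)) i) - ℓC (v1 j) = F (σD i, σC j) := by
        intro i j
        rw [hw1apply, hv1apply, hw1repr, hF]
      have hσD0 : σD 0 = q.1 := Equiv.swap_apply_left _ _
      have hσC0 : σC 0 = q.2 := Equiv.swap_apply_left _ _
      have hM00 : w1.repr (A (v1 0)) 0 ≠ 0 := by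
        rw [hw1repr, hv1apply, hσD0, hσC0]
        exact hMq
      have hmax : ∀ (i : Fin (m' + 1)) (j : Fin (n + 1)),
          ℓD (w1 i) - NS.ν (w1.repr (A (v1 j)) i) - ℓC (v1 j) ≤
            ℓD (w1 0) - NS.ν (w1.repr (A (v1 0)) 0) - ℓC (v1 0) := by
        intro i j
        rw [hFexpr, hFexpr, hσD0, hσC0]
        exact hq' _
      exact svd_step NS hlC hlD v1 hv1 w1 hw1 A hM00 hmax
        (fun {C'} {D'} _ _ _ _ ℓC' ℓD' hlC' hlD' v' hv' w' hw' A' =>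
          IHn hlC' hlD' v' hv' w' hw' A')

end Aux
/-- Theorem 3.3: every `Λ`-linear map between orthogonalizable
`Λ`-spaces admits a singular value decomposition. -/
theorem exists_singular_value_decomposition
    {Γ : AddSubgroup ℝ} {Λ : Type*} [Field Λ] (NS : NovikovStructure Γ Λ)
    {C D : Type*} [AddCommGroup C] [Module Λ C] [AddCommGroup D] [Module Λ D]
    {ℓC : C → EReal} {ℓD : D → EReal}
    (hC : IsOrthogonalizable NS ℓC) (hD : IsOrthogonalizable NS ℓD)
    (A : C →ₗ[Λ] D) :
    ∃ (r n m : ℕ) (hrn : r ≤ n) (hrm : r ≤ m)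
      (y : Module.Basis (Fin n) Λ C) (x : Module.Basis (Fin m) Λ D),
      IsSVD ℓC ℓD A hrn hrm y x := by
  obtain ⟨hlC, n, bC, hbC⟩ := hC
  obtain ⟨hlD, m, bD, hbD⟩ := hD
  obtain ⟨r, hrn, hrm, y, x, h⟩ := svd_aux NS n hlC hlD bC hbC bD hbD A
  obtain ⟨y', x', hsvd⟩ := presvd_isvd A hrn hrm y x h
  exact ⟨r, n, m, hrn, hrm, y', x', hsvd⟩
end
end
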